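/- arXiv:1912.11104 — 4 statements merged into one kernel-verified Lean document; each statement's English description precedes it below -/
import Mathlib

section
/- The number of faces of a melonic graph of the rank-3 tetrahedral tensor model with b bubbles equals (3/2)b + 3. Equivalently, since b is even for melonic graphs, F = 3(b/2) + 3. -/
/-!  A combinatorial model of the Feynman graphs of the rank-3 tetrahedral
(`O(N)^3`) tensor model.

A graph consists of a finite set `B` of bubbles (copies of the tetrahedron
`K_4`); each bubble has four vertices, so the vertex set is `B × Fin 4`.
Inside every bubble the edges of colors `1,2,3` are given once and for all by
the three fixed-point-free involutions of `Fin 4` (the proper 3-edge-coloring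
of `K_4`).  The color-0 propagator edges, one per vertex, are encoded by a
fixed-point-free involution `pairing` of the vertex set. -/

open Equiv

/-- The color-`c` (for `c ∈ {1,2,3}`, here `c : Fin 3`) perfect matching on the
four vertices of a tetrahedral bubble. -/
def bubblePerm : Fin 3 → Equiv.Perm (Fin 4) :=
  ![Equiv.swap 0 1 * Equiv.swap 2 3,
    Equiv.swap 0 2 * Equiv.swap 1 3,
    Equiv.swap 0 3 * Equiv.swap 1 2]

/-- A Feynman graph of the tetrahedral tensor model: a finite set of `K_4`
bubbles together with a fixed-point-free involution of the vertex set
describing the color-0 edges. -/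
structure TGraph where
  B : Type
  [fintypeB : Fintype B]
  [decB : DecidableEq B]
  pairing : Equiv.Perm (B × Fin 4)
  invol : ∀ v, pairing (pairing v) = v
  fixfree : ∀ v, pairing v ≠ v

attribute [instance] TGraph.fintypeB TGraph.decB

namespace TGraph

/-- The vertex set of a graph. -/
abbrev V (G : TGraph) : Type := G.B × Fin 4

/-- The permutation of the vertices given by the color-`c` edges inside the
bubbles. -/
def colPerm (G : TGraph) (c : Fin 3) : Equiv.Perm G.V :=
  (Equiv.refl G.B).prodCongr (bubblePerm c)

/-- The number of bubbles of a graph. -/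
def b (G : TGraph) : ℕ := Fintype.card G.B

/-- The subgroup of permutations of the vertices generated by the color-0
pairing and the color-`c` matching: its orbits are exactly the faces of
color `c` (cycles alternating colors `0` and `c`). -/
def faceGroup (G : TGraph) (c : Fin 3) : Subgroup (Equiv.Perm G.V) :=
  Subgroup.closure {G.pairing, G.colPerm c}

/-- Two vertices lie on the same face of color `c`. -/
def sameFace (G : TGraph) (c : Fin 3) (u v : G.V) : Prop :=
  u ∈ MulAction.orbit (G.faceGroup c) v

/-- The number of faces of color `c` of the graph. -/
noncomputable def numFaces (G : TGraph) (c : Fin 3) : ℕ :=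
  Nat.card (MulAction.orbitRel.Quotient (G.faceGroup c) G.V)

/-- The total number of faces of the graph. -/
noncomputable def F (G : TGraph) : ℕ := ∑ c : Fin 3, G.numFaces c

/-- The length of the face of color `c` through the vertex `v` (a face of
length `n` consists of `n` color-0 edges and `n` color-`c` edges, hence `2n`
vertices). -/
noncomputable def faceLength (G : TGraph) (c : Fin 3) (v : G.V) : ℕ :=
  Nat.card (MulAction.orbit (G.faceGroup c) v) / 2

/-- The subgroup generated by all edges of the graph. -/
def fullGroup (G : TGraph) : Subgroup (Equiv.Perm G.V) :=
  Subgroup.closure ({G.pairing} ∪ Set.range G.colPerm)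

/-- A graph is connected if any vertex can be reached from any other one along
its edges. -/
def Connected (G : TGraph) : Prop :=
  ∀ u v : G.V, u ∈ MulAction.orbit G.fullGroup v

/-- One step along an edge of the graph avoiding the color-0 edges whose
endpoints belong to `S`. -/
def stepAvoiding (G : TGraph) (S : Set G.V) (u v : G.V) : Prop :=
  (∃ c, v = G.colPerm c u) ∨ (v = G.pairing u ∧ u ∉ S ∧ v ∉ S)

/-- Reachability in the graph with the color-0 edges meeting `S` removed. -/
def reachAvoiding (G : TGraph) (S : Set G.V) : G.V → G.V → Prop :=
  Relation.ReflTransGen (G.stepAvoiding S)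

/-- The pair of color-0 edges through the vertices `u` and `w` disconnects the
graph when removed.  Together with the requirement that the two edges be
distinct, this is the notion of a 2-edge-cut of color-0 edges. -/
def CutDisconnects (G : TGraph) (u w : G.V) : Prop :=
  ¬ ∀ x y : G.V, G.reachAvoiding {u, G.pairing u, w, G.pairing w} x y

/-- Two vertices are connected by a 2-point function if they are joined by a
color-0 edge, or if their two (distinct) color-0 edges form a 2-edge-cut. -/
def TwoPoint (G : TGraph) (x y : G.V) : Prop :=
  G.pairing x = y ∨ (y ≠ x ∧ y ≠ G.pairing x ∧ G.CutDisconnects x y)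

/-- The flip of the two color-0 edges `{u, pairing u}` and `{w, pairing w}`
(assumed distinct) which reconnects `u` with `w` (and `pairing u` with
`pairing w`): the pairing is conjugated by the transposition exchanging
`pairing u` and `w`.  The other flip of this pair of edges is
`G.flip u (G.pairing w)`. -/
def flip (G : TGraph) (u w : G.V) : TGraph where
  B := G.B
  pairing := Equiv.swap (G.pairing u) w * G.pairing * Equiv.swap (G.pairing u) w
  invol := by
    intro v
    simp only [Equiv.Perm.mul_apply, Equiv.swap_apply_self, G.invol]
  fixfree := by
    intro v h
    simp only [Equiv.Perm.mul_apply] at h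
    have h' : G.pairing (Equiv.swap (G.pairing u) w v) = Equiv.swap (G.pairing u) w v := by
      have := congrArg (Equiv.swap (G.pairing u) w) h
      simpa using this
    exact G.fixfree _ h'

/-- The face of color `c` through the color-0 edge `{v, pairing v}` has
length 2 (it consists of this edge, a color-`c` edge, a second color-0 edge
and a second color-`c` edge closing the cycle). -/
def FaceLen2 (G : TGraph) (c : Fin 3) (v : G.V) : Prop :=
  G.pairing v ≠ G.colPerm c v ∧
    G.pairing (G.colPerm c (G.pairing v)) = G.colPerm c v

/-- A proper face of length 2 of color `c` through `v`: a face of length 2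
whose two color-0 edges connect two distinct bubbles. -/
def ProperFace2 (G : TGraph) (c : Fin 3) (v : G.V) : Prop :=
  G.FaceLen2 c v ∧ (G.pairing v).1 ≠ v.1

/-- A graph maximizes the number of faces if it is connected and no connected
graph with the same number of bubbles has more faces. -/
def MaximizesFaces (G : TGraph) : Prop :=
  G.Connected ∧ ∀ H : TGraph, H.Connected → H.b = G.b → H.F ≤ G.F

/-- Isomorphisms of graphs: bijections of the vertex sets commuting with the
color-0 pairing and with the colored matchings inside the bubbles. -/
structure Iso (G H : TGraph) where
  toEquiv : G.V ≃ H.V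
  map_pairing : ∀ v, toEquiv (G.pairing v) = H.pairing (toEquiv v)
  map_col : ∀ c v, toEquiv (G.colPerm c v) = H.colPerm c (toEquiv v)

/-- Two graphs are isomorphic. -/
def IsIso (G H : TGraph) : Prop := Nonempty (Iso G H)

end TGraph

open TGraph

/-- The leading-order two-bubble graph `G_2`: two tetrahedral bubbles with
corresponding vertices joined by four color-0 edges, so that all six faces
have length 2. -/
def G2 : TGraph where
  B := Fin 2
  pairing := (Equiv.swap (0 : Fin 2) 1).prodCongr (Equiv.refl (Fin 4))
  invol := by
    rintro ⟨i, k⟩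
    simp [Equiv.prodCongr_apply, Equiv.swap_apply_self]
  fixfree := by
    rintro ⟨i, k⟩ h
    have hi : Equiv.swap (0 : Fin 2) 1 i = i := congrArg Prod.fst h
    fin_cases i <;> simp_all

/-- The double tadpole `G_1^{(c)}`: one tetrahedral bubble whose two color-0
edges each join two vertices already adjacent by an edge of color `c`. -/
def G1 (c : Fin 3) : TGraph where
  B := Fin 1
  pairing := (Equiv.refl (Fin 1)).prodCongr (bubblePerm c)
  invol := by
    rintro ⟨i, k⟩
    have hk : ∀ j : Fin 4, bubblePerm c (bubblePerm c j) = j := by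
      fin_cases c <;> decide
    simp [Equiv.prodCongr_apply, hk]
  fixfree := by
    rintro ⟨i, k⟩ h
    have hk : bubblePerm c k = k := congrArg Prod.snd h
    have hne : ∀ j : Fin 4, bubblePerm c j ≠ j := by
      fin_cases c <;> decide
    exact hne k hk

namespace TGraph

variable (H K : TGraph)

/-- The image of a vertex of `H` in the glued graph. -/
def inlV (x : H.V) : (H.B ⊕ K.B) × Fin 4 := (Sum.inl x.1, x.2)

/-- The image of a vertex of `K` in the glued graph. -/
def inrV (y : K.V) : (H.B ⊕ K.B) × Fin 4 := (Sum.inr y.1, y.2)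

/-- The underlying function of the pairing of the graph obtained by gluing `H`
and `K` along the color-0 edges `{p, H.pairing p}` and `{q, K.pairing q}`:
these two edges are cut and the half-edges are reglued as `p — q` and
`H.pairing p — K.pairing q`.  The new pair of edges is a 2-edge-cut of the
resulting graph when `H` and `K` are connected. -/
def glueFun (p : H.V) (q : K.V) : (H.B ⊕ K.B) × Fin 4 → (H.B ⊕ K.B) × Fin 4 :=
  fun z =>
    match z with
    | (Sum.inl u, k) =>
        if (u, k) = p then inrV H K q
        else if (u, k) = H.pairing p then inrV H K (K.pairing q)
        else inlV H K (H.pairing (u, k))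
    | (Sum.inr u, k) =>
        if (u, k) = q then inlV H K p
        else if (u, k) = K.pairing q then inlV H K (H.pairing p)
        else inrV H K (K.pairing (u, k))

theorem glueFun_inlV (p : H.V) (q : K.V) (x : H.V) :
    glueFun H K p q (inlV H K x) =
      if x = p then inrV H K q
      else if x = H.pairing p then inrV H K (K.pairing q)
      else inlV H K (H.pairing x) := by
  cases x
  rfl

theorem glueFun_inrV (p : H.V) (q : K.V) (y : K.V) :
    glueFun H K p q (inrV H K y) =
      if y = q then inlV H K p
      else if y = K.pairing q then inlV H K (H.pairing p)
      else inrV H K (K.pairing y) := by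
  cases y
  rfl

theorem inlV_injective : Function.Injective (inlV H K) := by
  rintro ⟨u, k⟩ ⟨u', k'⟩ h
  have h1 : (Sum.inl u : H.B ⊕ K.B) = Sum.inl u' := congrArg Prod.fst h
  have h2 : k = k' := congrArg Prod.snd h
  exact Prod.ext (Sum.inl_injective h1) h2

theorem inrV_injective : Function.Injective (inrV H K) := by
  rintro ⟨u, k⟩ ⟨u', k'⟩ h
  have h1 : (Sum.inr u : H.B ⊕ K.B) = Sum.inr u' := congrArg Prod.fst h
  have h2 : k = k' := congrArg Prod.snd h
  exact Prod.ext (Sum.inr_injective h1) h2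

theorem inlV_ne_inrV (x : H.V) (y : K.V) : inlV H K x ≠ inrV H K y := by
  intro h
  exact Sum.inl_ne_inr (congrArg Prod.fst h)

theorem glueFun_invol_inl (p : H.V) (q : K.V) (x : H.V) :
    glueFun H K p q (glueFun H K p q (inlV H K x)) = inlV H K x := by
  rw [glueFun_inlV]
  by_cases h1 : x = p
  · rw [if_pos h1, glueFun_inrV, if_pos rfl, h1]
  · by_cases h2 : x = H.pairing p
    · rw [if_neg h1, if_pos h2, glueFun_inrV,
        if_neg (fun h => K.fixfree q h), if_pos rfl, h2]
    · have hne1 : H.pairing x ≠ p := by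
        intro h; apply h2
        have := congrArg H.pairing h
        rw [H.invol] at this; exact this
      have hne2 : H.pairing x ≠ H.pairing p := fun h => h1 (H.pairing.injective h)
      rw [if_neg h1, if_neg h2, glueFun_inlV, if_neg hne1, if_neg hne2, H.invol]

theorem glueFun_invol_inr (p : H.V) (q : K.V) (y : K.V) :
    glueFun H K p q (glueFun H K p q (inrV H K y)) = inrV H K y := by
  rw [glueFun_inrV]
  by_cases h1 : y = q
  · rw [if_pos h1, glueFun_inlV, if_pos rfl, h1]
  · by_cases h2 : y = K.pairing q
    · rw [if_neg h1, if_pos h2, glueFun_inlV,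
        if_neg (fun h => H.fixfree p h), if_pos rfl, h2]
    · have hne1 : K.pairing y ≠ q := by
        intro h; apply h2
        have := congrArg K.pairing h
        rw [K.invol] at this; exact this
      have hne2 : K.pairing y ≠ K.pairing q := fun h => h1 (K.pairing.injective h)
      rw [if_neg h1, if_neg h2, glueFun_inrV, if_neg hne1, if_neg hne2, K.invol]

theorem glueFun_involutive (p : H.V) (q : K.V) :
    Function.Involutive (glueFun H K p q) := by
  rintro ⟨(u | u), k⟩
  · exact glueFun_invol_inl H K p q (u, k)
  · exact glueFun_invol_inr H K p q (u, k)

theorem glueFun_fixfree (p : H.V) (q : K.V) :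
    ∀ z, glueFun H K p q z ≠ z := by
  have hl : ∀ x : H.V, glueFun H K p q (inlV H K x) ≠ inlV H K x := by
    intro x h
    rw [glueFun_inlV] at h
    by_cases h1 : x = p
    · rw [if_pos h1] at h
      exact inlV_ne_inrV H K x q h.symm
    · by_cases h2 : x = H.pairing p
      · rw [if_neg h1, if_pos h2] at h
        exact inlV_ne_inrV H K x (K.pairing q) h.symm
      · rw [if_neg h1, if_neg h2] at h
        exact H.fixfree x (inlV_injective H K h)
  have hr : ∀ y : K.V, glueFun H K p q (inrV H K y) ≠ inrV H K y := by
    intro y h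
    rw [glueFun_inrV] at h
    by_cases h1 : y = q
    · rw [if_pos h1] at h
      exact inlV_ne_inrV H K p y h
    · by_cases h2 : y = K.pairing q
      · rw [if_neg h1, if_pos h2] at h
        exact inlV_ne_inrV H K (H.pairing p) y h
      · rw [if_neg h1, if_neg h2] at h
        exact K.fixfree y (inrV_injective H K h)
  rintro ⟨(u | u), k⟩
  · exact hl (u, k)
  · exact hr (u, k)

/-- Gluing two graphs along a pair of color-0 edges.  When `H` and `K` are
connected, the two new color-0 edges form a 2-edge-cut of the glued graph, and
conversely every connected graph with a color-0 2-edge-cut arises this way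
from the two closed graphs obtained by cutting the two edges and closing each
side. -/
def glue (p : H.V) (q : K.V) : TGraph where
  B := H.B ⊕ K.B
  pairing := (glueFun_involutive H K p q).toPerm
  invol := fun v => glueFun_involutive H K p q v
  fixfree := fun v => glueFun_fixfree H K p q v

/-- Insertion of a melonic dipole (the 2-point graph obtained by cutting one
color-0 edge of `G_2`) on the color-0 edge `{v, G.pairing v}` of `G`. -/
def insertDipole (G : TGraph) (v : G.V) : TGraph :=
  glue G G2 v ((0 : Fin 2), (0 : Fin 4))

end TGraph

open TGraph

/-- Melonic graphs (up to isomorphism): `G_2` is melonic, and inserting a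
melonic dipole on any color-0 edge of a melonic graph yields a melonic
graph. -/
inductive IsMelonic : TGraph → Prop
  | base {G : TGraph} (h : IsIso G G2) : IsMelonic G
  | insert {G : TGraph} (hG : IsMelonic G) (v : G.V) {H : TGraph}
      (h : IsIso H (G.insertDipole v)) : IsMelonic H

/-- Double tadpoles decorated with melonic 2-point functions (up to
isomorphism): these are exactly the graphs obtained from one of the double
tadpoles `G_1^{(c)}` by repeatedly inserting melonic dipoles on color-0 edges,
i.e. double tadpoles whose two color-0 edges are replaced by melonic 2-point
functions. -/
inductive IsDecoratedTadpole : TGraph → Prop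
  | base {G : TGraph} (c : Fin 3) (h : IsIso G (G1 c)) : IsDecoratedTadpole G
  | insert {G : TGraph} (hG : IsDecoratedTadpole G) (v : G.V) {H : TGraph}
      (h : IsIso H (G.insertDipole v)) : IsDecoratedTadpole H


open MulAction Equiv

namespace FaceCount
variable {α β : Type*}

lemma mem_orbit_gen {S : Set (Equiv.Perm α)} {g : Equiv.Perm α} (hg : g ∈ S) (x : α) :
    g x ∈ orbit (Subgroup.closure S) x :=
  ⟨⟨g, Subgroup.subset_closure hg⟩, rfl⟩

lemma orbit_symm {G : Type*} [Group G] [MulAction G α] {x y : α}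
    (h : x ∈ orbit G y) : y ∈ orbit G x := by
  obtain ⟨g, rfl⟩ := h
  exact ⟨g⁻¹, by simp⟩

lemma orbit_trans {G : Type*} [Group G] [MulAction G α] {x y z : α}
    (h1 : x ∈ orbit G y) (h2 : y ∈ orbit G z) : x ∈ orbit G z := by
  obtain ⟨g, rfl⟩ := h1; obtain ⟨g', rfl⟩ := h2
  exact ⟨g * g', (mul_smul g g' z)⟩

/-- One step along a generator, extending an orbit membership. -/
lemma orbit_step {S : Set (Equiv.Perm α)} {g : Equiv.Perm α} (hg : g ∈ S) {x y : α}
    (h : y ∈ orbit (Subgroup.closure S) x) : g y ∈ orbit (Subgroup.closure S) x :=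
  orbit_trans (mem_orbit_gen hg y) h

lemma orbit_closure_lift {S : Set (Equiv.Perm α)} {T : Set (Equiv.Perm β)} (e : α → β)
    (h : ∀ g ∈ S, ∀ x, e (g x) ∈ orbit (Subgroup.closure T) (e x)) :
    ∀ g ∈ Subgroup.closure S, ∀ x, e (g x) ∈ orbit (Subgroup.closure T) (e x) := by
  intro g hg
  induction hg using Subgroup.closure_induction with
  | mem g hg => exact h g hg
  | one => intro x; simpa using mem_orbit_self (e x)
  | mul a b ha hb iha ihb =>
      intro x
      have : (a * b) x = a (b x) := rfl
      rw [this]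
      exact orbit_trans (iha (b x)) (ihb x)
  | inv a ha iha =>
      intro x
      have := iha (a⁻¹ x)
      rw [show a (a⁻¹ x) = x from a.apply_symm_apply x] at this
      exact orbit_symm this

lemma orbit_map {S : Set (Equiv.Perm α)} {T : Set (Equiv.Perm β)} (e : α → β)
    (h : ∀ g ∈ S, ∀ x, e (g x) ∈ orbit (Subgroup.closure T) (e x)) {x y : α}
    (hxy : x ∈ orbit (Subgroup.closure S) y) :
    e x ∈ orbit (Subgroup.closure T) (e y) := by
  obtain ⟨⟨g, hg⟩, rfl⟩ := hxy
  exact orbit_closure_lift e h g hg y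

lemma invariant_closure {S : Set (Equiv.Perm α)} (f : α → β)
    (hf : ∀ g ∈ S, ∀ x, f (g x) = f x) :
    ∀ g ∈ Subgroup.closure S, ∀ x, f (g x) = f x := by
  intro g hg
  induction hg using Subgroup.closure_induction with
  | mem g hg => exact hf g hg
  | one => intro x; rfl
  | mul a b ha hb iha ihb =>
      intro x
      have : (a * b) x = a (b x) := rfl
      rw [this, iha, ihb]
  | inv a ha iha =>
      intro x
      have := iha (a⁻¹ x)
      rw [show a (a⁻¹ x) = x from a.apply_symm_apply x] at this
      exact this.symm

/-- Counting orbits via an invariant classifying function. -/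
noncomputable def quotEquiv {S : Set (Equiv.Perm α)} (f : α → β)
    (hf : ∀ g ∈ S, ∀ x, f (g x) = f x)
    (sec : β → α) (hsec : ∀ b, f (sec b) = b)
    (hfib : ∀ x, sec (f x) ∈ orbit (Subgroup.closure S) x) :
    MulAction.orbitRel.Quotient (Subgroup.closure S) α ≃ β where
  toFun := Quotient.lift f (by
    intro a b hab
    obtain ⟨⟨g, hg⟩, rfl⟩ := orbitRel_apply.mp hab
    exact invariant_closure f hf g hg b)
  invFun b := Quotient.mk _ (sec b)
  left_inv := by
    intro q
    induction q using Quotient.ind with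
    | _ x =>
      exact Quotient.sound (orbitRel_apply.mpr (by simpa using hfib x))
  right_inv := fun b => hsec b

lemma card_quot {S : Set (Equiv.Perm α)} (f : α → β)
    (hf : ∀ g ∈ S, ∀ x, f (g x) = f x)
    (sec : β → α) (hsec : ∀ b, f (sec b) = b)
    (hfib : ∀ x, sec (f x) ∈ orbit (Subgroup.closure S) x) :
    Nat.card (MulAction.orbitRel.Quotient (Subgroup.closure S) α) = Nat.card β :=
  Nat.card_congr (quotEquiv f hf sec hsec hfib)

end FaceCount

namespace FaceCount
open MulAction Equiv TGraph

/-- Index of the σ-orbit of `k`: `true` for the pair `{0, σ 0}`. -/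
def faceInd (c : Fin 3) (k : Fin 4) : Bool := k = 0 ∨ k = bubblePerm c 0

def k1 : Fin 3 → Fin 4 := ![2, 1, 1]

lemma bp_invol : ∀ (c : Fin 3) (k : Fin 4), bubblePerm c (bubblePerm c k) = k := by decide
lemma bp0_ne : ∀ c : Fin 3, bubblePerm c 0 ≠ 0 := by decide
lemma k1_ne : ∀ c : Fin 3, k1 c ≠ 0 := by decide
lemma faceInd_bp : ∀ (c : Fin 3) (k : Fin 4), faceInd c (bubblePerm c k) = faceInd c k := by decide
lemma faceInd_0 : ∀ c : Fin 3, faceInd c 0 = true := by decide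
lemma faceInd_k1 : ∀ c : Fin 3, faceInd c (k1 c) = false := by decide
lemma faceInd_true : ∀ (c : Fin 3) (k : Fin 4), faceInd c k = true → k = 0 ∨ k = bubblePerm c 0 := by decide
lemma faceInd_false : ∀ (c : Fin 3) (k : Fin 4), faceInd c k = false → k = k1 c ∨ k = bubblePerm c (k1 c) := by decide
lemma fin2_cases : ∀ i j : Fin 2, j = i ∨ j = Equiv.swap 0 1 i := by decide

lemma pairing_mem {G : TGraph} {c : Fin 3} :
    G.pairing ∈ ({G.pairing, G.colPerm c} : Set (Equiv.Perm G.V)) := Set.mem_insert _ _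

lemma colPerm_mem {G : TGraph} {c : Fin 3} :
    G.colPerm c ∈ ({G.pairing, G.colPerm c} : Set (Equiv.Perm G.V)) :=
  Set.mem_insert_of_mem _ rfl

lemma g2_reach (c : Fin 3) (i j : Fin 2) (k l : Fin 4)
    (hl : l = k ∨ l = bubblePerm c k) :
    ((j, l) : G2.V) ∈ orbit (G2.faceGroup c) ((i, k) : G2.V) := by
  have s0 : ((i, k) : G2.V) ∈ orbit (G2.faceGroup c) ((i, k) : G2.V) := mem_orbit_self _
  have s1 : ((Equiv.swap (0:Fin 2) 1 i, k) : G2.V) ∈ orbit (G2.faceGroup c) ((i, k) : G2.V) :=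
    orbit_step pairing_mem s0
  have s2 : ((i, bubblePerm c k) : G2.V) ∈ orbit (G2.faceGroup c) ((i, k) : G2.V) :=
    orbit_step colPerm_mem s0
  have s3 : ((Equiv.swap (0:Fin 2) 1 i, bubblePerm c k) : G2.V) ∈ orbit (G2.faceGroup c) ((i, k) : G2.V) :=
    orbit_step colPerm_mem s1
  rcases fin2_cases i j with rfl | rfl <;> rcases hl with rfl | rfl <;> assumption

lemma numFaces_G2 (c : Fin 3) : G2.numFaces c = 2 := by
  have h := card_quot (S := {G2.pairing, G2.colPerm c})
    (f := fun z : G2.V => faceInd c z.2)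
    (by
      rintro g (rfl | rfl) ⟨i, k⟩
      · rfl
      · exact faceInd_bp c k)
    (fun b => if b then (((0:Fin 2), (0:Fin 4)) : G2.V) else (((0:Fin 2), k1 c) : G2.V))
    (by
      rintro (_ | _)
      · simpa using faceInd_k1 c
      · simpa using faceInd_0 c)
    (by
      rintro ⟨i, k⟩
      simp only
      rcases Bool.dichotomy (faceInd c k) with hk | hk
      case inr =>
          rw [if_pos hk]
          rcases faceInd_true c k hk with rfl | rfl
          · exact g2_reach c i 0 0 0 (Or.inl rfl)
          · exact g2_reach c i 0 (bubblePerm c 0) 0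
              (Or.inr (by rw [bp_invol]))
      case inl =>
          rw [if_neg (by simp [hk])]
          rcases faceInd_false c k hk with rfl | rfl
          · exact g2_reach c i 0 (k1 c) (k1 c) (Or.inl rfl)
          · exact g2_reach c i 0 (bubblePerm c (k1 c)) (k1 c)
              (Or.inr (by rw [bp_invol])))
  rw [TGraph.numFaces]
  rw [show G2.faceGroup c = Subgroup.closure {G2.pairing, G2.colPerm c} from rfl]
  rw [h]
  simp

end FaceCount
namespace FaceCount
open MulAction Equiv TGraph

lemma iso_numFaces {G H : TGraph} (e : Iso G H) (c : Fin 3) :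
    G.numFaces c = H.numFaces c := by
  have hfwd : ∀ g ∈ ({G.pairing, G.colPerm c} : Set (Equiv.Perm G.V)), ∀ x,
      e.toEquiv (g x) ∈ orbit (H.faceGroup c) (e.toEquiv x) := by
    rintro g (rfl | rfl) x
    · rw [e.map_pairing]; exact mem_orbit_gen pairing_mem _
    · rw [e.map_col]; exact mem_orbit_gen colPerm_mem _
  have hbwd : ∀ g ∈ ({H.pairing, H.colPerm c} : Set (Equiv.Perm H.V)), ∀ y,
      e.toEquiv.symm (g y) ∈ orbit (G.faceGroup c) (e.toEquiv.symm y) := by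
    rintro g (rfl | rfl) y
    · have : e.toEquiv.symm (H.pairing y) = G.pairing (e.toEquiv.symm y) := by
        apply e.toEquiv.injective
        rw [e.map_pairing, Equiv.apply_symm_apply, Equiv.apply_symm_apply]
      rw [this]; exact mem_orbit_gen pairing_mem _
    · have : e.toEquiv.symm (H.colPerm c y) = G.colPerm c (e.toEquiv.symm y) := by
        apply e.toEquiv.injective
        rw [e.map_col, Equiv.apply_symm_apply, Equiv.apply_symm_apply]
      rw [this]; exact mem_orbit_gen colPerm_mem _
  apply Nat.card_congr
  refine Quotient.congr e.toEquiv ?_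
  intro a b
  rw [orbitRel_apply, orbitRel_apply]
  constructor
  · exact fun hab => orbit_map e.toEquiv hfwd hab
  · intro hab
    have := orbit_map e.toEquiv.symm hbwd hab
    rw [Equiv.symm_apply_apply, Equiv.symm_apply_apply] at this
    exact this

lemma iso_F {G H : TGraph} (e : Iso G H) : G.F = H.F := by
  unfold TGraph.F
  exact Finset.sum_congr rfl fun c _ => iso_numFaces e c

lemma iso_b {G H : TGraph} (e : Iso G H) : G.b = H.b := by
  have h : Fintype.card G.V = Fintype.card H.V := Fintype.card_congr e.toEquiv
  rw [Fintype.card_prod, Fintype.card_prod, Fintype.card_fin] at h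
  exact Nat.eq_of_mul_eq_mul_right (by norm_num) h

lemma b_G2 : G2.b = 2 := rfl

lemma F_G2 : G2.F = 6 := by
  unfold TGraph.F
  simp [numFaces_G2]

lemma b_insertDipole (G : TGraph) (v : G.V) : (G.insertDipole v).b = G.b + 2 := by
  simp [TGraph.b, insertDipole, glue, Fintype.card_sum]
  exact Fintype.card_sum

end FaceCount
namespace FaceCount
open MulAction Equiv TGraph

lemma fin2_all : ∀ i : Fin 2, i = 0 ∨ i = 1 := by decide
lemma bpk1_ne : ∀ c : Fin 3, bubblePerm c (k1 c) ≠ 0 := by decide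
lemma g2p : ∀ (i : Fin 2) (k : Fin 4), G2.pairing (i, k) = (Equiv.swap (0:Fin 2) 1 i, k) :=
  fun _ _ => rfl
lemma g2p00 : G2.pairing ((0:Fin 2), (0:Fin 4)) = ((1:Fin 2), (0:Fin 4)) := by rfl
lemma sw0 : Equiv.swap (0:Fin 2) 1 0 = 1 := by decide
lemma sw1 : Equiv.swap (0:Fin 2) 1 1 = 0 := by decide

def ilD (G : TGraph) (v : G.V) (x : G.V) : (G.insertDipole v).V := inlV G G2 x
def irD (G : TGraph) (v : G.V) (y : G2.V) : (G.insertDipole v).V := inrV G G2 y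

variable (G : TGraph) (v : G.V) (c : Fin 3)

/-- The crucial walk through the inserted dipole connecting `v` to `G.pairing v`. -/
lemma dipole_mems :
    irD G v ((0:Fin 2), (0:Fin 4)) ∈ orbit ((G.insertDipole v).faceGroup c) (ilD G v v) ∧
    irD G v ((0:Fin 2), bubblePerm c 0) ∈ orbit ((G.insertDipole v).faceGroup c) (ilD G v v) ∧
    irD G v ((1:Fin 2), bubblePerm c 0) ∈ orbit ((G.insertDipole v).faceGroup c) (ilD G v v) ∧
    irD G v ((1:Fin 2), (0:Fin 4)) ∈ orbit ((G.insertDipole v).faceGroup c) (ilD G v v) ∧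
    ilD G v (G.pairing v) ∈ orbit ((G.insertDipole v).faceGroup c) (ilD G v v) := by
  have e0 : (G.insertDipole v).pairing (ilD G v v) = irD G v ((0:Fin 2), (0:Fin 4)) := by
    show glueFun G G2 v ((0:Fin 2), (0:Fin 4)) (inlV G G2 v) = _
    rw [glueFun_inlV, if_pos rfl]; rfl
  have t0 : irD G v ((0:Fin 2), (0:Fin 4)) ∈
      orbit ((G.insertDipole v).faceGroup c) (ilD G v v) := by
    rw [← e0]; exact orbit_step pairing_mem (mem_orbit_self _)
  have t1 : irD G v ((0:Fin 2), bubblePerm c 0) ∈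
      orbit ((G.insertDipole v).faceGroup c) (ilD G v v) :=
    orbit_step colPerm_mem t0
  have e2 : (G.insertDipole v).pairing (irD G v ((0:Fin 2), bubblePerm c 0)) =
      irD G v ((1:Fin 2), bubblePerm c 0) := by
    show glueFun G G2 v ((0:Fin 2), (0:Fin 4)) (inrV G G2 ((0:Fin 2), bubblePerm c 0)) = _
    rw [glueFun_inrV,
      if_neg (fun h => bp0_ne c (congrArg Prod.snd h)),
      if_neg (by rw [g2p00]; intro h; exact Fin.zero_ne_one (congrArg Prod.fst h))]
    rw [g2p, sw0]; rfl
  have t2 : irD G v ((1:Fin 2), bubblePerm c 0) ∈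
      orbit ((G.insertDipole v).faceGroup c) (ilD G v v) := by
    rw [← e2]; exact orbit_step pairing_mem t1
  have e3 : (G.insertDipole v).colPerm c (irD G v ((1:Fin 2), bubblePerm c 0)) =
      irD G v ((1:Fin 2), (0:Fin 4)) := by
    show irD G v ((1:Fin 2), bubblePerm c (bubblePerm c 0)) = _
    rw [bp_invol]
  have t3 : irD G v ((1:Fin 2), (0:Fin 4)) ∈
      orbit ((G.insertDipole v).faceGroup c) (ilD G v v) := by
    rw [← e3]; exact orbit_step colPerm_mem t2
  have e4 : (G.insertDipole v).pairing (irD G v ((1:Fin 2), (0:Fin 4))) =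
      ilD G v (G.pairing v) := by
    show glueFun G G2 v ((0:Fin 2), (0:Fin 4)) (inrV G G2 ((1:Fin 2), (0:Fin 4))) = _
    erw [glueFun_inrV, if_neg (by intro h; exact Fin.zero_ne_one (congrArg Prod.fst h).symm),
      if_pos g2p00.symm]
    rfl
  have t4 : ilD G v (G.pairing v) ∈
      orbit ((G.insertDipole v).faceGroup c) (ilD G v v) := by
    rw [← e4]; exact orbit_step pairing_mem t3
  exact ⟨t0, t1, t2, t3, t4⟩

/-- Transport of orbits of `G` into the glued graph along `inlV`. -/
lemma lift_inl {x y : G.V} (h : x ∈ orbit (G.faceGroup c) y) :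
    ilD G v x ∈ orbit ((G.insertDipole v).faceGroup c) (ilD G v y) := by
  refine orbit_map (ilD G v) ?_ h
  rintro g (rfl | rfl) x
  · by_cases hx : x = v
    · rw [hx]; exact (dipole_mems G v c).2.2.2.2
    · by_cases hx' : x = G.pairing v
      · rw [hx', G.invol]
        exact orbit_symm (dipole_mems G v c).2.2.2.2
      · have e : (G.insertDipole v).pairing (ilD G v x) = ilD G v (G.pairing x) := by
          show glueFun G G2 v ((0:Fin 2), (0:Fin 4)) (inlV G G2 x) = _
          rw [glueFun_inlV, if_neg hx, if_neg hx']; rfl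
        rw [← e]
        exact orbit_step pairing_mem (mem_orbit_self _)
  · exact orbit_step colPerm_mem (mem_orbit_self _)

/-- The second `σ`-cycle of the dipole: the new face. -/
lemma dipole_mems2 :
    irD G v ((0:Fin 2), k1 c) ∈ orbit ((G.insertDipole v).faceGroup c) (irD G v ((0:Fin 2), k1 c)) ∧
    irD G v ((0:Fin 2), bubblePerm c (k1 c)) ∈ orbit ((G.insertDipole v).faceGroup c) (irD G v ((0:Fin 2), k1 c)) ∧
    irD G v ((1:Fin 2), k1 c) ∈ orbit ((G.insertDipole v).faceGroup c) (irD G v ((0:Fin 2), k1 c)) ∧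
    irD G v ((1:Fin 2), bubblePerm c (k1 c)) ∈ orbit ((G.insertDipole v).faceGroup c) (irD G v ((0:Fin 2), k1 c)) := by
  have hP : ∀ (i : Fin 2) (k : Fin 4), k ≠ 0 →
      (G.insertDipole v).pairing (irD G v (i, k)) =
        irD G v (Equiv.swap (0:Fin 2) 1 i, k) := by
    intro i k hk
    show glueFun G G2 v ((0:Fin 2), (0:Fin 4)) (inrV G G2 (i, k)) = _
    rw [glueFun_inrV, if_neg (fun h => hk (congrArg Prod.snd h)),
      if_neg (by rw [g2p00]; exact fun h => hk (congrArg Prod.snd h)), g2p]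
    rfl
  have t0 : irD G v ((0:Fin 2), k1 c) ∈
      orbit ((G.insertDipole v).faceGroup c) (irD G v ((0:Fin 2), k1 c)) := mem_orbit_self _
  have t1 : irD G v ((0:Fin 2), bubblePerm c (k1 c)) ∈
      orbit ((G.insertDipole v).faceGroup c) (irD G v ((0:Fin 2), k1 c)) :=
    orbit_step colPerm_mem t0
  have t2 : irD G v ((1:Fin 2), k1 c) ∈
      orbit ((G.insertDipole v).faceGroup c) (irD G v ((0:Fin 2), k1 c)) := by
    have := orbit_step pairing_mem t0
    rwa [hP 0 (k1 c) (k1_ne c), sw0] at this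
  have t3 : irD G v ((1:Fin 2), bubblePerm c (k1 c)) ∈
      orbit ((G.insertDipole v).faceGroup c) (irD G v ((0:Fin 2), k1 c)) := by
    have := orbit_step pairing_mem t1
    rwa [hP 0 (bubblePerm c (k1 c)) (bpk1_ne c), sw0] at this
  exact ⟨t0, t1, t2, t3⟩

end FaceCount
namespace FaceCount
open MulAction Equiv TGraph

def mkQ (G : TGraph) (c : Fin 3) (x : G.V) :
    MulAction.orbitRel.Quotient (G.faceGroup c) G.V := Quotient.mk _ x

lemma mkQ_eq_of_orbit {G : TGraph} {c : Fin 3} {x y : G.V}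
    (h : x ∈ orbit (G.faceGroup c) y) : mkQ G c x = mkQ G c y :=
  Quotient.sound (orbitRel_apply.mpr h)

lemma mkQ_pairing {G : TGraph} {c : Fin 3} (x : G.V) :
    mkQ G c (G.pairing x) = mkQ G c x :=
  mkQ_eq_of_orbit (mem_orbit_gen pairing_mem x)

lemma mkQ_col {G : TGraph} {c : Fin 3} (x : G.V) :
    mkQ G c (G.colPerm c x) = mkQ G c x :=
  mkQ_eq_of_orbit (mem_orbit_gen colPerm_mem x)

/-- Classification of the vertices of the dipole-inserted graph by faces. -/
def classify (G : TGraph) (v : G.V) (c : Fin 3) :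
    (G.insertDipole v).V →
      (MulAction.orbitRel.Quotient (G.faceGroup c) G.V) ⊕ Unit := fun z =>
  match z with
  | (Sum.inl u, k) => Sum.inl (mkQ G c (u, k))
  | (Sum.inr _, k) => cond (faceInd c k) (Sum.inl (mkQ G c v)) (Sum.inr ())

variable (G : TGraph) (v : G.V) (c : Fin 3)

lemma classify_ilD (x : G.V) : classify G v c (ilD G v x) = Sum.inl (mkQ G c x) := rfl

lemma numFaces_insertDipole : (G.insertDipole v).numFaces c = G.numFaces c + 1 := by
  classical
  have hf : ∀ g ∈ ({(G.insertDipole v).pairing, (G.insertDipole v).colPerm c} :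
      Set (Equiv.Perm (G.insertDipole v).V)), ∀ z, classify G v c (g z) = classify G v c z := by
    rintro g (rfl | rfl) ⟨(u | i), k⟩
    · -- pairing, left vertex
      have hz : (G.insertDipole v).pairing ((Sum.inl u, k) : (G.insertDipole v).V) =
          glueFun G G2 v ((0:Fin 2), (0:Fin 4)) (inlV G G2 ((u, k) : G.V)) := rfl
      rw [hz, glueFun_inlV]
      by_cases h1 : ((u, k) : G.V) = v
      · rw [if_pos h1]
        have l1 : classify G v c (inrV G G2 ((0:Fin 2), (0:Fin 4))) =
            cond (faceInd c 0) (Sum.inl (mkQ G c v)) (Sum.inr ()) := rfl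
        have l2 : classify G v c ((Sum.inl u, k) : (G.insertDipole v).V) =
            Sum.inl (mkQ G c (u, k)) := rfl
        rw [l1, l2, faceInd_0, Bool.cond_true, h1]
      · by_cases h2 : ((u, k) : G.V) = G.pairing v
        · rw [if_neg h1, if_pos h2]
          have l1 : classify G v c (inrV G G2 (G2.pairing ((0:Fin 2), (0:Fin 4)))) =
              cond (faceInd c 0) (Sum.inl (mkQ G c v)) (Sum.inr ()) := by
            rw [g2p00]; rfl
          have l2 : classify G v c ((Sum.inl u, k) : (G.insertDipole v).V) =
              Sum.inl (mkQ G c (u, k)) := rfl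
          rw [l1, l2, faceInd_0, Bool.cond_true, h2, mkQ_pairing]
        · rw [if_neg h1, if_neg h2]
          have l1 : classify G v c (inlV G G2 (G.pairing (u, k))) =
              Sum.inl (mkQ G c (G.pairing (u, k))) := rfl
          have l2 : classify G v c ((Sum.inl u, k) : (G.insertDipole v).V) =
              Sum.inl (mkQ G c (u, k)) := rfl
          rw [l1, l2, mkQ_pairing]
    · -- pairing, dipole vertex
      have hz : (G.insertDipole v).pairing ((Sum.inr i, k) : (G.insertDipole v).V) =
          glueFun G G2 v ((0:Fin 2), (0:Fin 4)) (inrV G G2 ((i, k) : G2.V)) := rfl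
      rw [hz, glueFun_inrV]
      by_cases h1 : ((i, k) : G2.V) = ((0:Fin 2), (0:Fin 4))
      · erw [if_pos h1]
        have l2 : classify G v c ((Sum.inr i, k) : (G.insertDipole v).V) =
            cond (faceInd c k) (Sum.inl (mkQ G c v)) (Sum.inr ()) := rfl
        have l1 : classify G v c (inlV G G2 v) = Sum.inl (mkQ G c v) := rfl
        rw [l1, l2, show k = 0 from congrArg Prod.snd h1, faceInd_0, Bool.cond_true]
      · by_cases h2 : ((i, k) : G2.V) = G2.pairing ((0:Fin 2), (0:Fin 4))
        · erw [if_neg h1, if_pos h2]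
          have hk : k = 0 := by
            have := congrArg Prod.snd h2
            rw [g2p00] at this
            exact this
          have l2 : classify G v c ((Sum.inr i, k) : (G.insertDipole v).V) =
              cond (faceInd c k) (Sum.inl (mkQ G c v)) (Sum.inr ()) := rfl
          have l1 : classify G v c (inlV G G2 (G.pairing v)) =
              Sum.inl (mkQ G c (G.pairing v)) := rfl
          rw [l1, l2, hk, faceInd_0, Bool.cond_true, mkQ_pairing]
        · erw [if_neg h1, if_neg h2]
          rfl
    · -- colPerm, left vertex
      have l1 : classify G v c ((G.insertDipole v).colPerm c (Sum.inl u, k)) =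
          Sum.inl (mkQ G c (G.colPerm c (u, k))) := rfl
      have l2 : classify G v c ((Sum.inl u, k) : (G.insertDipole v).V) =
          Sum.inl (mkQ G c (u, k)) := rfl
      rw [l1, l2, mkQ_col]
    · -- colPerm, dipole vertex
      have l1 : classify G v c ((G.insertDipole v).colPerm c (Sum.inr i, k)) =
          cond (faceInd c (bubblePerm c k)) (Sum.inl (mkQ G c v)) (Sum.inr ()) := rfl
      have l2 : classify G v c ((Sum.inr i, k) : (G.insertDipole v).V) =
          cond (faceInd c k) (Sum.inl (mkQ G c v)) (Sum.inr ()) := rfl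
      rw [l1, l2, faceInd_bp]
  have h := card_quot (S := {(G.insertDipole v).pairing, (G.insertDipole v).colPerm c})
    (f := classify G v c) hf
    (Sum.elim (fun q => ilD G v q.out) (fun _ => irD G v ((0:Fin 2), k1 c)))
    (by
      rintro (q | u)
      · exact congrArg Sum.inl (Quotient.out_eq q)
      · have l : classify G v c (irD G v ((0:Fin 2), k1 c)) =
            cond (faceInd c (k1 c)) (Sum.inl (mkQ G c v)) (Sum.inr ()) := rfl
        rw [Sum.elim_inr, l, faceInd_k1, Bool.cond_false]
    )
    (by
      rintro ⟨(u | i), k⟩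
      · -- left vertex
        have l : classify G v c ((Sum.inl u, k) : (G.insertDipole v).V) =
            Sum.inl (mkQ G c (u, k)) := rfl
        rw [l, Sum.elim_inl]
        exact lift_inl G v c (orbitRel_apply.mp (Quotient.mk_out ((u, k) : G.V)))
      · rcases Bool.dichotomy (faceInd c k) with hk | hk
        · -- new face
          have l : classify G v c ((Sum.inr i, k) : (G.insertDipole v).V) = Sum.inr () := by
            have l0 : classify G v c ((Sum.inr i, k) : (G.insertDipole v).V) =
                cond (faceInd c k) (Sum.inl (mkQ G c v)) (Sum.inr ()) := rfl
            rw [l0, hk, Bool.cond_false]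
          rw [l, Sum.elim_inr]
          have hmem : ((Sum.inr i, k) : (G.insertDipole v).V) ∈
              orbit ((G.insertDipole v).faceGroup c) (irD G v ((0:Fin 2), k1 c)) := by
            rcases fin2_all i with rfl | rfl <;> rcases faceInd_false c k hk with rfl | rfl
            · exact (dipole_mems2 G v c).1
            · exact (dipole_mems2 G v c).2.1
            · exact (dipole_mems2 G v c).2.2.1
            · exact (dipole_mems2 G v c).2.2.2
          exact orbit_symm hmem
        · -- old face through v
          have l : classify G v c ((Sum.inr i, k) : (G.insertDipole v).V) =
              Sum.inl (mkQ G c v) := by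
            have l0 : classify G v c ((Sum.inr i, k) : (G.insertDipole v).V) =
                cond (faceInd c k) (Sum.inl (mkQ G c v)) (Sum.inr ()) := rfl
            rw [l0, hk, Bool.cond_true]
          rw [l, Sum.elim_inl]
          have h1 : ((Sum.inr i, k) : (G.insertDipole v).V) ∈
              orbit ((G.insertDipole v).faceGroup c) (ilD G v v) := by
            rcases fin2_all i with rfl | rfl <;> rcases faceInd_true c k hk with rfl | rfl
            · exact (dipole_mems G v c).1
            · exact (dipole_mems G v c).2.1
            · exact (dipole_mems G v c).2.2.2.1
            · exact (dipole_mems G v c).2.2.1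
          have h2 : ilD G v (Quotient.out (mkQ G c v)) ∈
              orbit ((G.insertDipole v).faceGroup c) (ilD G v v) :=
            lift_inl G v c (orbitRel_apply.mp (Quotient.mk_out v))
          exact orbit_trans h2 (orbit_symm h1)
    )
  rw [TGraph.numFaces,
    show (G.insertDipole v).faceGroup c =
      Subgroup.closure {(G.insertDipole v).pairing, (G.insertDipole v).colPerm c} from rfl,
    h]
  have : Finite (MulAction.orbitRel.Quotient (G.faceGroup c) G.V) := Quotient.finite _
  rw [Nat.card_sum]
  simp [TGraph.numFaces, Nat.card_unique]

lemma F_insertDipole : (G.insertDipole v).F = G.F + 3 := by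
  unfold TGraph.F
  rw [Finset.sum_congr rfl fun c _ => numFaces_insertDipole G v c]
  rw [Finset.sum_add_distrib]
  simp

end FaceCount
/-- The number of faces of a melonic graph of the rank-3
tetrahedral tensor model with `b` bubbles equals `(3/2) b + 3`; equivalently,
since `b` is even for melonic graphs, `F = 3 (b / 2) + 3`. -/
theorem melonic_face_count (G : TGraph) (h : IsMelonic G) :
    2 ∣ G.b ∧ (G.F : ℚ) = 3 / 2 * G.b + 3 ∧ G.F = 3 * (G.b / 2) + 3 := by
  induction h with
  | @base G h =>
      obtain ⟨e⟩ := h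
      have hb : G.b = 2 := by rw [FaceCount.iso_b e, FaceCount.b_G2]
      have hF : G.F = 6 := by rw [FaceCount.iso_F e, FaceCount.F_G2]
      refine ⟨by rw [hb], ?_, ?_⟩ <;> rw [hb, hF] <;> norm_num
  | @insert G0 hG v H h ih =>
      obtain ⟨e⟩ := h
      have hb : H.b = G0.b + 2 := by rw [FaceCount.iso_b e, FaceCount.b_insertDipole]
      have hF : H.F = G0.F + 3 := by rw [FaceCount.iso_F e, FaceCount.F_insertDipole]
      obtain ⟨hdvd, hQ, hN⟩ := ih
      refine ⟨by rw [hb]; exact Nat.dvd_add hdvd (by norm_num), ?_, ?_⟩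
      · rw [hb, hF]
        push_cast
        push_cast at hQ
        linarith
      · rw [hb, hF, hN, Nat.add_div_right _ (by norm_num : 0 < 2)]
        ring
end

section
/- The number of faces of a double tadpole decorated with melonic 2-point functions, with b bubbles in total, equals (3/2)(b-1) + 4; in particular b is odd. -/
/-!  A combinatorial model of the Feynman graphs of the rank-3 tetrahedral
(`O(N)^3`) tensor model.

A graph consists of a finite set `B` of bubbles (copies of the tetrahedron
`K_4`); each bubble has four vertices, so the vertex set is `B × Fin 4`.
Inside every bubble the edges of colors `1,2,3` are given once and for all by
the three fixed-point-free involutions of `Fin 4` (the proper 3-edge-coloring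
of `K_4`).  The color-0 propagator edges, one per vertex, are encoded by a
fixed-point-free involution `pairing` of the vertex set. -/

open Equiv

open TGraph

open TGraph

section Infra

open Equiv MulAction

variable {V : Type*}

/-- Induction principle for orbits of a closure subgroup of permutations. -/
lemma orbit_rec (S : Set (Equiv.Perm V)) (Q : V → V → Prop)
    (hr : ∀ v, Q v v) (hs : ∀ u v, Q u v → Q v u)
    (ht : ∀ u v w, Q u v → Q v w → Q u w)
    (hgen : ∀ s ∈ S, ∀ v, Q (s v) v) :
    ∀ u v : V, u ∈ MulAction.orbit (Subgroup.closure S) v → Q u v := by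
  have key : ∀ g ∈ Subgroup.closure S, ∀ v, Q (g v) v := by
    intro g hg
    induction hg using Subgroup.closure_induction with
    | mem s hsS => exact hgen s hsS
    | one => intro v; simpa using hr v
    | mul a b _ _ ha hb => intro v; exact ht _ _ _ (ha (b v)) (hb v)
    | inv a _ ha =>
        intro v
        have := ha (a⁻¹ v)
        simp only [Equiv.Perm.coe_inv, Equiv.apply_symm_apply] at this
        exact hs _ _ this
  rintro u v ⟨⟨g, hg⟩, rfl⟩
  exact key g hg v

lemma mem_orbit_of_gen {S : Set (Equiv.Perm V)} {s : Equiv.Perm V} (hsS : s ∈ S) (v : V) :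
    s v ∈ MulAction.orbit (Subgroup.closure S) v :=
  ⟨⟨s, Subgroup.subset_closure hsS⟩, rfl⟩

lemma orbit_symm' {G : Type*} [Group G] [MulAction G V] {u v : V}
    (h : u ∈ MulAction.orbit G v) : v ∈ MulAction.orbit G u :=
  MulAction.mem_orbit_symm.mp h

lemma orbit_trans' {G : Type*} [Group G] [MulAction G V] {u v w : V}
    (h1 : u ∈ MulAction.orbit G v) (h2 : v ∈ MulAction.orbit G w) :
    u ∈ MulAction.orbit G w := by
  rw [← MulAction.orbit_eq_iff.mpr h2]; exact h1

/-- Count orbits by exhibiting a "connected-component coloring". -/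
lemma count_orbits (S : Set (Equiv.Perm V)) {T : Type*} (f : V → T)
    (hgen : ∀ s ∈ S, ∀ v, f (s v) = f v)
    (hsurj : Function.Surjective f)
    (hconn : ∀ u v, f u = f v → u ∈ MulAction.orbit (Subgroup.closure S) v) :
    Nat.card (MulAction.orbitRel.Quotient (Subgroup.closure S) V) = Nat.card T := by
  have hinv : ∀ u v : V, u ∈ MulAction.orbit (Subgroup.closure S) v → f u = f v :=
    orbit_rec S (fun u v => f u = f v) (fun _ => rfl) (fun _ _ h => h.symm)
      (fun _ _ _ h1 h2 => h1.trans h2) hgen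
  have e : MulAction.orbitRel.Quotient (Subgroup.closure S) V ≃ T := by
    refine Equiv.ofBijective (Quotient.lift f ?_) ⟨?_, ?_⟩
    · intro a b hab
      exact hinv a b (MulAction.orbitRel_apply.mp hab)
    · intro a b hab
      induction a using Quotient.inductionOn
      induction b using Quotient.inductionOn
      exact Quotient.sound (MulAction.orbitRel_apply.mpr (hconn _ _ hab))
    · intro t
      obtain ⟨v, rfl⟩ := hsurj t
      exact ⟨Quotient.mk _ v, rfl⟩
  exact Nat.card_congr e

end Infra

namespace TGraph

variable {G : TGraph}

lemma sameFace_refl (c : Fin 3) (v : G.V) : G.sameFace c v v :=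
  MulAction.mem_orbit_self v

lemma sameFace_symm {c : Fin 3} {u v : G.V} (h : G.sameFace c u v) : G.sameFace c v u :=
  orbit_symm' h

lemma sameFace_trans {c : Fin 3} {u v w : G.V} (h1 : G.sameFace c u v)
    (h2 : G.sameFace c v w) : G.sameFace c u w :=
  orbit_trans' h1 h2

lemma pairing_mem_gens (c : Fin 3) :
    G.pairing ∈ ({G.pairing, G.colPerm c} : Set (Equiv.Perm G.V)) :=
  Set.mem_insert _ _

lemma colPerm_mem_gens (c : Fin 3) :
    G.colPerm c ∈ ({G.pairing, G.colPerm c} : Set (Equiv.Perm G.V)) :=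
  Set.mem_insert_of_mem _ rfl

lemma sameFace_pairing (c : Fin 3) (v : G.V) : G.sameFace c (G.pairing v) v :=
  mem_orbit_of_gen (pairing_mem_gens c) v

lemma sameFace_colPerm (c : Fin 3) (v : G.V) : G.sameFace c (G.colPerm c v) v :=
  mem_orbit_of_gen (colPerm_mem_gens c) v

/-- Counting faces by a coloring. -/
lemma numFaces_eq (c : Fin 3) {T : Type*} (f : G.V → T)
    (h0 : ∀ v, f (G.pairing v) = f v) (hc : ∀ v, f (G.colPerm c v) = f v)
    (hsurj : Function.Surjective f)
    (hconn : ∀ u v, f u = f v → G.sameFace c u v) :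
    G.numFaces c = Nat.card T := by
  refine count_orbits {G.pairing, G.colPerm c} f ?_ hsurj hconn
  rintro s (rfl | rfl) v
  · exact h0 v
  · exact hc v

end TGraph
namespace TGraph

lemma sameFace_of_cases {G : TGraph} {c : Fin 3} {u v : G.V}
    (h : u = v ∨ u = G.pairing v ∨ u = G.colPerm c v ∨ u = G.colPerm c (G.pairing v)) :
    G.sameFace c u v := by
  rcases h with rfl | rfl | rfl | rfl
  · exact sameFace_refl c u
  · exact sameFace_pairing c v
  · exact sameFace_colPerm c v
  · exact sameFace_trans (sameFace_colPerm c _) (sameFace_pairing c v)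

lemma numFaces_eq_card {G : TGraph} (c : Fin 3) {n : ℕ} (f : G.V → Fin n)
    (h0 : ∀ v, f (G.pairing v) = f v) (hc : ∀ v, f (G.colPerm c v) = f v)
    (hsurj : Function.Surjective f)
    (h : ∀ u v, f u = f v →
      u = v ∨ u = G.pairing v ∨ u = G.colPerm c v ∨ u = G.colPerm c (G.pairing v)) :
    G.numFaces c = n := by
  rw [numFaces_eq c f h0 hc hsurj (fun u v huv => sameFace_of_cases (h u v huv)),
    Nat.card_eq_fintype_card, Fintype.card_fin]

end TGraph

lemma G1_numFaces (c c' : Fin 3) : (G1 c).numFaces c' = if c' = c then 2 else 1 := by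
  fin_cases c <;> fin_cases c' <;> simp only [if_true, if_false, reduceIte] <;>
    first
      | exact TGraph.numFaces_eq_card _ (fun x => ![0,0,1,1] x.2)
          (by decide) (by decide) (by decide) (by decide)
      | exact TGraph.numFaces_eq_card _ (fun x => ![0,1,0,1] x.2)
          (by decide) (by decide) (by decide) (by decide)
      | exact TGraph.numFaces_eq_card _ (fun x => ![0,1,1,0] x.2)
          (by decide) (by decide) (by decide) (by decide)
      | exact TGraph.numFaces_eq_card _ (fun _ => (0 : Fin 1))
          (by decide) (by decide) (by decide) (by decide)

lemma G1_F (c : Fin 3) : (G1 c).F = 4 := by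
  simp [TGraph.F, Fin.sum_univ_three, G1_numFaces]
  fin_cases c <;> decide

lemma G1_b (c : Fin 3) : (G1 c).b = 1 := by
  simp [TGraph.b, G1]
  rfl
namespace TGraph

variable {G H : TGraph}

lemma Iso.symm_map_pairing (e : Iso G H) (w : H.V) :
    e.toEquiv.symm (H.pairing w) = G.pairing (e.toEquiv.symm w) := by
  apply e.toEquiv.injective
  rw [e.map_pairing, Equiv.apply_symm_apply, Equiv.apply_symm_apply]

lemma Iso.symm_map_col (e : Iso G H) (c : Fin 3) (w : H.V) :
    e.toEquiv.symm (H.colPerm c w) = G.colPerm c (e.toEquiv.symm w) := by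
  apply e.toEquiv.injective
  rw [e.map_col, Equiv.apply_symm_apply, Equiv.apply_symm_apply]

lemma Iso.sameFace_transfer (e : Iso G H) (c : Fin 3) {u v : H.V}
    (h : H.sameFace c u v) :
    G.sameFace c (e.toEquiv.symm u) (e.toEquiv.symm v) := by
  refine orbit_rec {H.pairing, H.colPerm c}
    (fun u v => G.sameFace c (e.toEquiv.symm u) (e.toEquiv.symm v)) ?_ ?_ ?_ ?_ u v h
  · intro w; exact sameFace_refl _ _
  · intro _ _ h'; exact sameFace_symm h'
  · intro _ _ _ h1 h2; exact sameFace_trans h1 h2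
  · rintro s (rfl | rfl) w
    · rw [e.symm_map_pairing]; exact sameFace_pairing _ _
    · rw [e.symm_map_col]; exact sameFace_colPerm _ _

lemma Iso.numFaces_eq (e : Iso G H) (c : Fin 3) : G.numFaces c = H.numFaces c := by
  refine TGraph.numFaces_eq c
    (fun x => (Quotient.mk _ (e.toEquiv x) :
      MulAction.orbitRel.Quotient (H.faceGroup c) H.V)) ?_ ?_ ?_ ?_
  · intro v
    show (Quotient.mk _ (e.toEquiv (G.pairing v)) : _) = _
    rw [e.map_pairing]
    exact Quotient.sound (MulAction.orbitRel_apply.mpr (sameFace_pairing _ _))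
  · intro v
    show (Quotient.mk _ (e.toEquiv (G.colPerm c v)) : _) = _
    rw [e.map_col]
    exact Quotient.sound (MulAction.orbitRel_apply.mpr (sameFace_colPerm _ _))
  · intro q
    induction q using Quotient.inductionOn with
    | h w => exact ⟨e.toEquiv.symm w, by simp⟩
  · intro u v huv
    have := e.sameFace_transfer c (MulAction.orbitRel_apply.mp (Quotient.exact huv))
    simpa using this

lemma Iso.F_eq (e : Iso G H) : G.F = H.F := by
  unfold TGraph.F
  exact Finset.sum_congr rfl fun c _ => e.numFaces_eq c

lemma Iso.b_eq (e : Iso G H) : G.b = H.b := by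
  have h := Fintype.card_congr e.toEquiv
  simp only [Fintype.card_prod, Fintype.card_fin] at h
  simpa [TGraph.b] using Nat.eq_of_mul_eq_mul_right (by norm_num : 0 < 4) h

end TGraph
section Dipole

open TGraph

lemma bp_invol : ∀ c : Fin 3, ∀ k, bubblePerm c (bubblePerm c k) = k := by decide

lemma bp0_ne : ∀ c : Fin 3, bubblePerm c 0 ≠ 0 := by decide

lemma bp_mem_iff : ∀ c : Fin 3, ∀ k : Fin 4,
    ((bubblePerm c k = 0 ∨ bubblePerm c k = bubblePerm c 0) ↔ (k = 0 ∨ k = bubblePerm c 0)) := by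
  decide

lemma bp_pair : ∀ c : Fin 3, ∀ k k' : Fin 4, k ≠ 0 → k ≠ bubblePerm c 0 →
    k' ≠ 0 → k' ≠ bubblePerm c 0 → k' = k ∨ k' = bubblePerm c k := by decide

lemma bp_exists : ∀ c : Fin 3, ∃ k : Fin 4, k ≠ 0 ∧ k ≠ bubblePerm c 0 := by decide

variable (G : TGraph) (v : G.V) (c : Fin 3)

local notation "GG" => G.insertDipole v
local notation "q0" => ((0 : Fin 2), (0 : Fin 4))

lemma insertDipole_pairing_apply (z : (GG).V) :
    (GG).pairing z = glueFun G G2 v q0 z := rfl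

lemma insertDipole_pairing_inl (x : G.V) :
    (GG).pairing (inlV G G2 x) =
      if x = v then inrV G G2 q0
      else if x = G.pairing v then inrV G G2 (G2.pairing q0)
      else inlV G G2 (G.pairing x) := by
  exact glueFun_inlV G G2 v q0 x

lemma insertDipole_pairing_inr (y : G2.V) :
    (GG).pairing (inrV G G2 y) =
      if y = (q0 : G2.V) then inlV G G2 v
      else if y = G2.pairing q0 then inlV G G2 (G.pairing v)
      else inrV G G2 (G2.pairing y) := by
  exact glueFun_inrV G G2 v q0 y

lemma G2_pairing_apply (i : Fin 2) (k : Fin 4) :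
    G2.pairing (i, k) = (Equiv.swap (0 : Fin 2) 1 i, k) := rfl

lemma insertDipole_colPerm_inl (x : G.V) :
    (GG).colPerm c (inlV G G2 x) = inlV G G2 (G.colPerm c x) := rfl

lemma insertDipole_colPerm_inr (y : G2.V) :
    (GG).colPerm c (inrV G G2 y) = inrV G G2 (G2.colPerm c y) := rfl

-- the four "spliced" vertices of the inserted bubbles lie on the face of `v`
lemma splice_chain : ∀ i : Fin 2, ∀ k : Fin 4, (k = 0 ∨ k = bubblePerm c 0) →
    (GG).sameFace c (inrV G G2 (i, k)) (inlV G G2 v) := by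
  have h00 : (GG).sameFace c (inrV G G2 q0) (inlV G G2 v) := by
    have := sameFace_pairing (G := GG) c (inlV G G2 v)
    rwa [insertDipole_pairing_inl, if_pos rfl] at this
  have h0m : (GG).sameFace c (inrV G G2 ((0 : Fin 2), bubblePerm c 0)) (inlV G G2 v) := by
    refine sameFace_trans ?_ h00
    have := sameFace_colPerm (G := GG) c (inrV G G2 q0)
    rwa [insertDipole_colPerm_inr] at this
  have h1m : (GG).sameFace c (inrV G G2 ((1 : Fin 2), bubblePerm c 0)) (inlV G G2 v) := by
    refine sameFace_trans ?_ h0m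
    have := sameFace_pairing (G := GG) c (inrV G G2 ((0 : Fin 2), bubblePerm c 0))
    rw [insertDipole_pairing_inr, if_neg, if_neg] at this
    · exact this
    · intro h
      exact bp0_ne c (by simpa [G2_pairing_apply] using congrArg Prod.snd h)
    · intro h
      exact bp0_ne c (by simpa using congrArg Prod.snd h)
  have h10 : (GG).sameFace c (inrV G G2 ((1 : Fin 2), (0 : Fin 4))) (inlV G G2 v) := by
    refine sameFace_trans ?_ h1m
    have := sameFace_colPerm (G := GG) c (inrV G G2 ((1 : Fin 2), bubblePerm c 0))
    rwa [insertDipole_colPerm_inr, show G2.colPerm c ((1 : Fin 2), bubblePerm c 0) =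
      ((1 : Fin 2), (0 : Fin 4)) from by
        show ((1 : Fin 2), bubblePerm c (bubblePerm c 0)) = _
        rw [bp_invol]] at this
  intro i k hk
  fin_cases i <;> rcases hk with rfl | rfl
  · exact h00
  · exact h0m
  · exact h10
  · exact h1m

-- crossing the cut: `pairing v` is still on the face of `v` in the glued graph
lemma cross_cut : (GG).sameFace c (inlV G G2 (G.pairing v)) (inlV G G2 v) := by
  refine sameFace_trans ?_ (splice_chain G v c 1 0 (Or.inl rfl))
  have := sameFace_pairing (G := GG) c (inrV G G2 ((1 : Fin 2), (0 : Fin 4)))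
  rw [insertDipole_pairing_inr] at this
  rw [if_neg (by decide), if_pos (by rfl)] at this
  exact this

-- lifting faces of `G` to the glued graph
lemma lift_face : ∀ x y : G.V, G.sameFace c x y →
    (GG).sameFace c (inlV G G2 x) (inlV G G2 y) := by
  refine orbit_rec {G.pairing, G.colPerm c}
    (fun x y => (GG).sameFace c (inlV G G2 x) (inlV G G2 y)) ?_ ?_ ?_ ?_
  · intro x; exact sameFace_refl _ _
  · intro _ _ h; exact sameFace_symm h
  · intro _ _ _ h1 h2; exact sameFace_trans h1 h2
  · rintro s (rfl | rfl) w
    · by_cases h1 : w = v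
      · subst h1; exact cross_cut G w c
      · by_cases h2 : w = G.pairing v
        · subst h2
          rw [G.invol]
          exact sameFace_symm (cross_cut G v c)
        · have := sameFace_pairing (G := GG) c (inlV G G2 w)
          rwa [insertDipole_pairing_inl, if_neg h1, if_neg h2] at this
    · have := sameFace_colPerm (G := GG) c (inlV G G2 w)
      rwa [insertDipole_colPerm_inl] at this

-- the new face: the four remaining vertices of the inserted bubbles
lemma other_face : ∀ i i' : Fin 2, ∀ k k' : Fin 4,
    k ≠ 0 → k ≠ bubblePerm c 0 → k' ≠ 0 → k' ≠ bubblePerm c 0 →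
    (GG).sameFace c (inrV G G2 (i, k)) (inrV G G2 (i', k')) := by
  have hstepP : ∀ i : Fin 2, ∀ k : Fin 4, k ≠ 0 →
      (GG).sameFace c (inrV G G2 (Equiv.swap (0 : Fin 2) 1 i, k)) (inrV G G2 (i, k)) := by
    intro i k hk
    have := sameFace_pairing (G := GG) c (inrV G G2 (i, k))
    rw [insertDipole_pairing_inr,
      if_neg (fun h => hk (by simpa using congrArg Prod.snd h)),
      if_neg (fun h => hk (by simpa [G2_pairing_apply] using congrArg Prod.snd h)),
      G2_pairing_apply] at this
    exact this
  have hstepM : ∀ i : Fin 2, ∀ k : Fin 4,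
      (GG).sameFace c (inrV G G2 (i, bubblePerm c k)) (inrV G G2 (i, k)) := by
    intro i k
    have := sameFace_colPerm (G := GG) c (inrV G G2 (i, k))
    rwa [insertDipole_colPerm_inr] at this
  intro i i' k k' hk0 hkm hk0' hkm'
  have hsame : ∀ j j' : Fin 2, (GG).sameFace c (inrV G G2 (j, k)) (inrV G G2 (j', k)) := by
    intro j j'
    by_cases h : j = j'
    · subst h; exact sameFace_refl _ _
    · have hswap : Equiv.swap (0 : Fin 2) 1 j' = j := by fin_cases j <;> fin_cases j' <;>
        simp_all
      have := hstepP j' k hk0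
      rwa [hswap] at this
  rcases bp_pair c k k' hk0 hkm hk0' hkm' with rfl | rfl
  · exact hsame i i'
  · refine sameFace_trans (hsame i i') (sameFace_symm ?_)
    exact hstepM i' k

end Dipole
section DipoleCount

open TGraph MulAction

variable (G : TGraph) (v : G.V) (c : Fin 3)

/-- The face coloring of the glued graph: faces of `G` plus one new face. -/
noncomputable def fcol : (G.insertDipole v).V →
    (orbitRel.Quotient (G.faceGroup c) G.V) ⊕ Unit := fun z =>
  match z.1 with
  | Sum.inl u => Sum.inl (Quotient.mk _ ((u, z.2) : G.V))
  | Sum.inr _ =>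
      if z.2 = 0 ∨ z.2 = bubblePerm c 0 then Sum.inl (Quotient.mk _ v) else Sum.inr ()

lemma fcol_inl (x : G.V) : fcol G v c (inlV G G2 x) = Sum.inl (Quotient.mk _ x) := rfl

lemma fcol_inr (y : G2.V) : fcol G v c (inrV G G2 y) =
    if y.2 = 0 ∨ y.2 = bubblePerm c 0 then Sum.inl (Quotient.mk _ v) else Sum.inr () := rfl

lemma face_mk_eq {x y : G.V} (h : G.sameFace c x y) :
    (Quotient.mk _ x : orbitRel.Quotient (G.faceGroup c) G.V) = Quotient.mk _ y :=
  Quotient.sound (MulAction.orbitRel_apply.mpr h)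

lemma insertDipole_numFaces : (G.insertDipole v).numFaces c = G.numFaces c + 1 := by
  have key : (G.insertDipole v).numFaces c =
      Nat.card ((orbitRel.Quotient (G.faceGroup c) G.V) ⊕ Unit) := by
    refine TGraph.numFaces_eq c (fcol G v c) ?_ ?_ ?_ ?_
    · -- invariance under the pairing
      rintro ⟨(u | i), k⟩
      · rw [show ((Sum.inl u, k) : (G.insertDipole v).V) = inlV G G2 (u, k) from rfl,
          insertDipole_pairing_inl]
        by_cases h1 : ((u, k) : G.V) = v
        · rw [if_pos h1, fcol_inl, fcol_inr, h1]
          simp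
        · by_cases h2 : ((u, k) : G.V) = G.pairing v
          · rw [if_neg h1, if_pos h2, fcol_inl, fcol_inr, h2]
            rw [if_pos (Or.inl (show (G2.pairing ((0 : Fin 2), (0 : Fin 4))).2 = 0 from rfl))]
            exact congrArg Sum.inl (face_mk_eq G c (sameFace_symm (sameFace_pairing c v)))
          · rw [if_neg h1, if_neg h2, fcol_inl, fcol_inl]
            exact congrArg Sum.inl (face_mk_eq G c (sameFace_pairing c _))
      · rw [show ((Sum.inr i, k) : (G.insertDipole v).V) = inrV G G2 (i, k) from rfl,
          insertDipole_pairing_inr]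
        by_cases h1 : ((i, k) : G2.V) = (((0 : Fin 2), (0 : Fin 4)) : G2.V)
        · have hk : k = 0 := by simpa using congrArg Prod.snd h1
          rw [if_pos h1, fcol_inl, fcol_inr]
          subst hk
          rw [if_pos (Or.inl rfl)]
        · by_cases h2 : ((i, k) : G2.V) = G2.pairing ((0 : Fin 2), (0 : Fin 4))
          · have hk : k = 0 := by
              simpa [G2_pairing_apply] using congrArg Prod.snd h2
            rw [if_neg h1, if_pos h2, fcol_inl, fcol_inr]
            subst hk
            rw [if_pos (Or.inl rfl)]
            exact congrArg Sum.inl (face_mk_eq G c (sameFace_pairing c v))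
          · rw [if_neg h1, if_neg h2, fcol_inr, fcol_inr]
            erw [G2_pairing_apply]
    · -- invariance under the colored matching
      rintro ⟨(u | i), k⟩
      · rw [show ((Sum.inl u, k) : (G.insertDipole v).V) = inlV G G2 (u, k) from rfl,
          insertDipole_colPerm_inl, fcol_inl, fcol_inl]
        exact congrArg Sum.inl (face_mk_eq G c (sameFace_colPerm c _))
      · rw [show ((Sum.inr i, k) : (G.insertDipole v).V) = inrV G G2 (i, k) from rfl,
          insertDipole_colPerm_inr, fcol_inr, fcol_inr]
        show (if bubblePerm c k = 0 ∨ bubblePerm c k = bubblePerm c 0 then _ else _) = _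
        by_cases h : k = 0 ∨ k = bubblePerm c 0
        · rw [if_pos ((bp_mem_iff c k).mpr h), if_pos h]
        · rw [if_neg (fun hh => h ((bp_mem_iff c k).mp hh)), if_neg h]
    · -- surjectivity
      rintro (q | u)
      · induction q using Quotient.inductionOn with
        | h x => exact ⟨inlV G G2 x, fcol_inl G v c x⟩
      · obtain ⟨k1, hk10, hk1m⟩ := bp_exists c
        cases u
        refine ⟨inrV G G2 ((0 : Fin 2), k1), ?_⟩
        rw [fcol_inr]
        simp [hk10, hk1m]
    · -- connectivity of the fibers
      rintro ⟨(u | i), k⟩ ⟨(u' | i'), k'⟩ h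
      · -- both in G
        have h' := (fcol_inl G v c (u, k)).symm.trans (h.trans (fcol_inl G v c (u', k')))
        have := Quotient.exact (Sum.inl_injective h')
        exact lift_face G v c _ _ (MulAction.orbitRel_apply.mp this)
      · -- left in G, right in the inserted bubbles
        have h' := (fcol_inl G v c (u, k)).symm.trans (h.trans (fcol_inr G v c (i', k')))
        by_cases hk : k' = 0 ∨ k' = bubblePerm c 0
        · rw [if_pos hk] at h'
          have := Quotient.exact (Sum.inl_injective h')
          have hxy : G.sameFace c (u, k) v := MulAction.orbitRel_apply.mp this
          exact sameFace_trans (lift_face G v c _ _ hxy)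
            (sameFace_symm (splice_chain G v c i' k' hk))
        · rw [if_neg hk] at h'
          exact absurd h' (by simp)
      · -- right in G, left in the inserted bubbles
        have h' := (fcol_inr G v c (i, k)).symm.trans (h.trans (fcol_inl G v c (u', k')))
        by_cases hk : k = 0 ∨ k = bubblePerm c 0
        · rw [if_pos hk] at h'
          have := Quotient.exact (Sum.inl_injective h')
          have hxy : G.sameFace c v (u', k') := MulAction.orbitRel_apply.mp this
          exact sameFace_trans (splice_chain G v c i k hk) (lift_face G v c _ _ hxy)
        · rw [if_neg hk] at h'
          exact absurd h' (by simp)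
      · -- both in the inserted bubbles
        have h' := (fcol_inr G v c (i, k)).symm.trans (h.trans (fcol_inr G v c (i', k')))
        by_cases hk : k = 0 ∨ k = bubblePerm c 0
        · by_cases hk' : k' = 0 ∨ k' = bubblePerm c 0
          · exact sameFace_trans (splice_chain G v c i k hk)
              (sameFace_symm (splice_chain G v c i' k' hk'))
          · rw [if_pos hk, if_neg hk'] at h'
            exact absurd h' (by simp)
        · by_cases hk' : k' = 0 ∨ k' = bubblePerm c 0
          · rw [if_neg hk, if_pos hk'] at h'
            exact absurd h' (by simp)
          · push_neg at hk hk'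
            exact other_face G v c i i' k k' hk.1 hk.2 hk'.1 hk'.2
    
  rw [key, Nat.card_sum]
  congr 1
  exact Nat.card_unique

end DipoleCount
lemma insertDipole_F (G : TGraph) (v : G.V) : (G.insertDipole v).F = G.F + 3 := by
  simp only [TGraph.F, Fin.sum_univ_three, insertDipole_numFaces]
  ring

lemma insertDipole_b (G : TGraph) (v : G.V) : (G.insertDipole v).b = G.b + 2 := by
  simp [TGraph.b, TGraph.insertDipole, TGraph.glue]
  exact Fintype.card_sum.trans rfl

/-- The number of faces of a double tadpole decorated with
melonic 2-point functions, with `b` bubbles in total, equals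
`(3/2) (b - 1) + 4`; in particular `b` is odd. -/
theorem decorated_tadpole_face_count (G : TGraph) (h : IsDecoratedTadpole G) :
    Odd G.b ∧ (G.F : ℚ) = 3 / 2 * ((G.b : ℚ) - 1) + 4 := by
  induction h with
  | base c hiso =>
      obtain ⟨e⟩ := hiso
      rw [e.b_eq, e.F_eq, G1_b, G1_F]
      exact ⟨odd_one, by norm_num⟩
  | insert hG v hiso ih =>
      obtain ⟨e⟩ := hiso
      obtain ⟨hodd, hF⟩ := ih
      rw [e.b_eq, e.F_eq, insertDipole_b, insertDipole_F]
      refine ⟨hodd.add_even even_two, ?_⟩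
      push_cast
      rw [hF]
      ring
end

section
/- Insertion of a melonic dipole on a color-0 edge of a graph G of the tetrahedral model increases the number of bubbles by 2 and the total number of faces by exactly 3. -/
/-!  A combinatorial model of the Feynman graphs of the rank-3 tetrahedral
(`O(N)^3`) tensor model.

A graph consists of a finite set `B` of bubbles (copies of the tetrahedron
`K_4`); each bubble has four vertices, so the vertex set is `B × Fin 4`.
Inside every bubble the edges of colors `1,2,3` are given once and for all by
the three fixed-point-free involutions of `Fin 4` (the proper 3-edge-coloring
of `K_4`).  The color-0 propagator edges, one per vertex, are encoded by a
fixed-point-free involution `pairing` of the vertex set. -/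

open Equiv

open TGraph

open TGraph

/-! ### Auxiliary machinery for the dipole-insertion face count -/

namespace DipoleAux

open MulAction

theorem bp_invol : ∀ (c : Fin 3) (k : Fin 4), bubblePerm c (bubblePerm c k) = k := by decide

theorem bp_a_ne : ∀ c : Fin 3, bubblePerm c 0 ≠ 0 := by decide

/-- A canonical vertex index outside the "through" face. -/
def pick : Fin 3 → Fin 4 := ![2, 1, 1]

theorem pick_spec : ∀ c : Fin 3, ¬(pick c = 0 ∨ pick c = bubblePerm c 0) := by decide

theorem other_spec : ∀ (c : Fin 3) (k : Fin 4), ¬(k = 0 ∨ k = bubblePerm c 0) →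
    k = pick c ∨ k = bubblePerm c (pick c) := by decide

theorem bp_cond_iff : ∀ (c : Fin 3) (k : Fin 4),
    (bubblePerm c k = 0 ∨ bubblePerm c k = bubblePerm c 0) ↔ (k = 0 ∨ k = bubblePerm c 0) := by
  decide

theorem orbit_trans' {M : Type*} [Group M] {α : Type*} [MulAction M α] {a b d : α}
    (h1 : a ∈ orbit M b) (h2 : b ∈ orbit M d) : a ∈ orbit M d := by
  obtain ⟨g, rfl⟩ := h1
  obtain ⟨h, rfl⟩ := h2
  refine ⟨g * h, ?_⟩
  simp [mul_smul]

theorem orbit_symm' {M : Type*} [Group M] {α : Type*} [MulAction M α] {a b : α}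
    (h : a ∈ orbit M b) : b ∈ orbit M a := mem_orbit_symm.mp h

theorem orbitEquivalence {M : Type*} [Group M] {α : Type*} [MulAction M α] :
    Equivalence (fun a b : α => a ∈ orbit M b) :=
  ⟨fun a => mem_orbit_self a, orbit_symm', orbit_trans'⟩

/-- Permutations every application of which preserves a relation transported
through a map `f`. -/
def pullbackSubgroup {α β : Type*} (f : α → β) (r : β → β → Prop) (h : Equivalence r) :
    Subgroup (Equiv.Perm α) where
  carrier := {g | ∀ x, r (f (g x)) (f x)}
  one_mem' := fun _ => h.refl _
  mul_mem' := by
    intro g₁ g₂ h1 h2 x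
    rw [Equiv.Perm.mul_apply]
    exact h.trans (h1 (g₂ x)) (h2 x)
  inv_mem' := by
    intro g hg x
    have := hg (g⁻¹ x)
    rw [show g (g⁻¹ x) = x from Equiv.apply_symm_apply g x] at this
    exact h.symm this

theorem mem_pullbackSubgroup {α β : Type*} {f : α → β} {r : β → β → Prop}
    {h : Equivalence r} {g : Equiv.Perm α} :
    g ∈ pullbackSubgroup f r h ↔ ∀ x, r (f (g x)) (f x) := Iff.rfl

theorem pairing_mem_faceGroup (G : TGraph) (c : Fin 3) : G.pairing ∈ G.faceGroup c :=
  Subgroup.subset_closure (Set.mem_insert _ _)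

theorem colPerm_mem_faceGroup (G : TGraph) (c : Fin 3) : G.colPerm c ∈ G.faceGroup c :=
  Subgroup.subset_closure (Set.mem_insert_iff.mpr (Or.inr rfl))

theorem step_orbit {G : TGraph} {c : Fin 3} {g : Equiv.Perm G.V}
    (hg : g ∈ G.faceGroup c) (x : G.V) :
    g x ∈ MulAction.orbit (G.faceGroup c) x := ⟨⟨g, hg⟩, rfl⟩

section Main

variable (G : TGraph) (v : G.V) (c : Fin 3)

/-- The class map from the vertices of the dipole-inserted graph to the faces
of `G` of color `c` plus one extra face. -/
noncomputable def dipClass : (G.insertDipole v).V →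
    (MulAction.orbitRel.Quotient (G.faceGroup c) G.V) ⊕ Unit :=
  fun z =>
    match z with
    | (Sum.inl u, k) => Sum.inl (Quotient.mk'' (u, k))
    | (Sum.inr _, k) =>
        if k = 0 ∨ k = bubblePerm c 0 then Sum.inl (Quotient.mk'' v) else Sum.inr ()

theorem dipClass_inl (x : G.V) :
    dipClass G v c (inlV G G2 x) = Sum.inl (Quotient.mk'' x) := by
  obtain ⟨u, k⟩ := x; rfl

theorem dipClass_inr (y : G2.V) :
    dipClass G v c (inrV G G2 y) =
      if y.2 = 0 ∨ y.2 = bubblePerm c 0 then Sum.inl (Quotient.mk'' v) else Sum.inr () := by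
  obtain ⟨i, k⟩ := y; rfl

theorem dipClass_inl' (u : G.B) (k : Fin 4) :
    dipClass G v c (Sum.inl u, k) = Sum.inl (Quotient.mk'' (u, k)) := rfl

theorem dipClass_inr' (i : G2.B) (k : Fin 4) :
    dipClass G v c (Sum.inr i, k) =
      if k = 0 ∨ k = bubblePerm c 0 then Sum.inl (Quotient.mk'' v) else Sum.inr () := rfl

theorem pairing_insert (z : (G.insertDipole v).V) :
    (G.insertDipole v).pairing z = glueFun G G2 v ((0 : Fin 2), (0 : Fin 4)) z := rfl

theorem colPerm_insert_inl (x : G.V) :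
    (G.insertDipole v).colPerm c (inlV G G2 x) = inlV G G2 (G.colPerm c x) := rfl

theorem colPerm_insert_inr (y : G2.V) :
    (G.insertDipole v).colPerm c (inrV G G2 y) = inrV G G2 (y.1, bubblePerm c y.2) := rfl

theorem G2_pairing (y : G2.V) : G2.pairing y = (Equiv.swap (0 : Fin 2) 1 y.1, y.2) := rfl

theorem G2_pairing_q : G2.pairing ((0 : Fin 2), (0 : Fin 4)) = ((1 : Fin 2), (0 : Fin 4)) := rfl

theorem class_pairing (x : G.V) :
    (Quotient.mk'' (G.pairing x) : MulAction.orbitRel.Quotient (G.faceGroup c) G.V) =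
      Quotient.mk'' x :=
  Quotient.sound' (MulAction.orbitRel_apply.mpr (step_orbit (pairing_mem_faceGroup G c) x))

theorem class_col (x : G.V) :
    (Quotient.mk'' (G.colPerm c x) : MulAction.orbitRel.Quotient (G.faceGroup c) G.V) =
      Quotient.mk'' x :=
  Quotient.sound' (MulAction.orbitRel_apply.mpr (step_orbit (colPerm_mem_faceGroup G c) x))

theorem dipClass_pairing (z : (G.insertDipole v).V) :
    dipClass G v c ((G.insertDipole v).pairing z) = dipClass G v c z := by
  rw [pairing_insert]
  rcases z with ⟨u | i, k⟩
  · -- vertex of `G`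
    change dipClass G v c (glueFun G G2 v _ (inlV G G2 (u, k))) = _
    rw [glueFun_inlV, dipClass_inl']
    by_cases h1 : (u, k) = v
    · rw [if_pos h1, dipClass_inr, if_pos (Or.inl rfl), h1]
    · by_cases h2 : (u, k) = G.pairing v
      · erw [if_neg h1, if_pos h2, G2_pairing_q, dipClass_inr, if_pos (Or.inl rfl),
          h2, class_pairing]
      · rw [if_neg h1, if_neg h2, dipClass_inl, class_pairing]
  · -- vertex of the dipole
    change dipClass G v c (glueFun G G2 v _ (inrV G G2 (i, k))) = _
    rw [glueFun_inrV, dipClass_inr']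
    by_cases h1 : (i, k) = (((0 : Fin 2), (0 : Fin 4)) : G2.V)
    · rw [if_pos h1, dipClass_inl]
      have hk : k = 0 := congrArg Prod.snd h1
      rw [if_pos (Or.inl hk)]
    · by_cases h2 : (i, k) = G2.pairing ((0 : Fin 2), (0 : Fin 4))
      · rw [if_neg h1, if_pos h2, dipClass_inl, class_pairing]
        have hk : k = 0 := congrArg Prod.snd h2
        rw [if_pos (Or.inl hk)]
      · rw [if_neg h1, if_neg h2, dipClass_inr, G2_pairing]


theorem dipClass_col (z : (G.insertDipole v).V) :
    dipClass G v c ((G.insertDipole v).colPerm c z) = dipClass G v c z := by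
  rcases z with ⟨u | i, k⟩
  · change dipClass G v c ((G.insertDipole v).colPerm c (inlV G G2 (u, k))) = _
    rw [colPerm_insert_inl, dipClass_inl, dipClass_inl', class_col]
  · change dipClass G v c ((G.insertDipole v).colPerm c (inrV G G2 (i, k))) = _
    rw [colPerm_insert_inr, dipClass_inr, dipClass_inr']
    by_cases h : k = 0 ∨ k = bubblePerm c 0
    · rw [if_pos h, if_pos ((bp_cond_iff c k).mpr h)]
    · rw [if_neg h, if_neg (fun h' => h ((bp_cond_iff c k).mp h'))]

/-- Invariance of the class map under the face group of the inserted graph. -/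
theorem dipClass_invariant {g : Equiv.Perm (G.insertDipole v).V}
    (hg : g ∈ (G.insertDipole v).faceGroup c) (z : (G.insertDipole v).V) :
    dipClass G v c (g z) = dipClass G v c z := by
  have hle : (G.insertDipole v).faceGroup c ≤
      pullbackSubgroup (dipClass G v c) (· = ·) eq_equivalence := by
    apply Subgroup.closure_le _ |>.mpr
    intro g hg
    rcases hg with rfl | hg
    · exact dipClass_pairing G v c
    · rw [Set.mem_singleton_iff] at hg
      subst hg
      exact dipClass_col G v c
  exact hle hg z

/-! Explicit chains of steps in the inserted graph. -/

/-- Vertices of `G` seen in the inserted graph. -/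
def iL (G : TGraph) (v : G.V) (x : G.V) : (G.insertDipole v).V := inlV G G2 x

/-- Dipole vertices seen in the inserted graph. -/
def iR (G : TGraph) (v : G.V) (y : G2.V) : (G.insertDipole v).V := inrV G G2 y

theorem step_inr_q :
    iR G v ((0 : Fin 2), (0 : Fin 4)) ∈
      MulAction.orbit ((G.insertDipole v).faceGroup c) (iL G v v) := by
  simp only [iL, iR]
  have h : (G.insertDipole v).pairing (inlV G G2 v) = inrV G G2 ((0 : Fin 2), (0 : Fin 4)) := by
    erw [pairing_insert, glueFun_inlV, if_pos rfl]
  rw [← h]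
  exact step_orbit (pairing_mem_faceGroup _ c) _

theorem step_inr_0a :
    iR G v ((0 : Fin 2), bubblePerm c 0) ∈
      MulAction.orbit ((G.insertDipole v).faceGroup c) (iL G v v) := by
  refine orbit_trans' ?_ (step_inr_q G v c)
  simp only [iL, iR]
  have h : (G.insertDipole v).colPerm c (inrV G G2 ((0 : Fin 2), (0 : Fin 4))) =
      inrV G G2 ((0 : Fin 2), bubblePerm c 0) := rfl
  rw [← h]
  exact step_orbit (colPerm_mem_faceGroup _ c) _

theorem step_inr_1a :
    iR G v ((1 : Fin 2), bubblePerm c 0) ∈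
      MulAction.orbit ((G.insertDipole v).faceGroup c) (iL G v v) := by
  refine orbit_trans' ?_ (step_inr_0a G v c)
  simp only [iL, iR]
  have h : (G.insertDipole v).pairing (inrV G G2 ((0 : Fin 2), bubblePerm c 0)) =
      inrV G G2 ((1 : Fin 2), bubblePerm c 0) := by
    erw [pairing_insert, glueFun_inrV]
    rw [if_neg, if_neg]
    · rfl
    · intro h'
      exact bp_a_ne c (congrArg Prod.snd h')
    · intro h'
      exact bp_a_ne c (congrArg Prod.snd h')
  rw [← h]
  exact step_orbit (pairing_mem_faceGroup _ c) _

theorem step_inr_10 :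
    iR G v ((1 : Fin 2), (0 : Fin 4)) ∈
      MulAction.orbit ((G.insertDipole v).faceGroup c) (iL G v v) := by
  refine orbit_trans' ?_ (step_inr_1a G v c)
  simp only [iL, iR]
  have h : (G.insertDipole v).colPerm c (inrV G G2 ((1 : Fin 2), bubblePerm c 0)) =
      inrV G G2 ((1 : Fin 2), (0 : Fin 4)) := by
    rw [colPerm_insert_inr]
    exact congrArg _ (congrArg _ (bp_invol c 0))
  rw [← h]
  exact step_orbit (colPerm_mem_faceGroup _ c) _

theorem step_inl_pv :
    iL G v (G.pairing v) ∈
      MulAction.orbit ((G.insertDipole v).faceGroup c) (iL G v v) := by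
  refine orbit_trans' ?_ (step_inr_10 G v c)
  simp only [iL, iR]
  have h : (G.insertDipole v).pairing (inrV G G2 ((1 : Fin 2), (0 : Fin 4))) =
      inlV G G2 (G.pairing v) := by
    erw [pairing_insert, glueFun_inrV]
    erw [if_neg, if_pos G2_pairing_q.symm]
    intro h'
    have h2 : (1 : Fin 2) = 0 := congrArg Prod.fst h'
    exact absurd h2 (by decide)
  rw [← h]
  exact step_orbit (pairing_mem_faceGroup _ c) _

/-- Transfer of faces of `G` to the inserted graph. -/
theorem inl_orbit_of_orbit {x y : G.V} (h : x ∈ MulAction.orbit (G.faceGroup c) y) :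
    iL G v x ∈ MulAction.orbit ((G.insertDipole v).faceGroup c) (iL G v y) := by
  have key : ∀ x : G.V, iL G v (G.pairing x) ∈
      MulAction.orbit ((G.insertDipole v).faceGroup c) (iL G v x) := by
    intro x
    by_cases h1 : x = v
    · rw [h1]; exact step_inl_pv G v c
    · by_cases h2 : x = G.pairing v
      · rw [h2, G.invol]
        exact orbit_symm' (step_inl_pv G v c)
      · simp only [iL]
        have h : (G.insertDipole v).pairing (inlV G G2 x) = inlV G G2 (G.pairing x) := by
          erw [pairing_insert, glueFun_inlV, if_neg h1, if_neg h2]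
        rw [← h]
        exact step_orbit (pairing_mem_faceGroup _ c) _
  have hle : G.faceGroup c ≤ pullbackSubgroup (iL G v)
      (fun a b => a ∈ MulAction.orbit ((G.insertDipole v).faceGroup c) b)
      orbitEquivalence := by
    apply Subgroup.closure_le _ |>.mpr
    intro g hg
    rcases hg with rfl | hg
    · exact fun x => key x
    · rw [Set.mem_singleton_iff] at hg
      subst hg
      intro x
      simp only [iL]
      rw [← colPerm_insert_inl G v c x]
      exact step_orbit (colPerm_mem_faceGroup _ c) _
  obtain ⟨g, rfl⟩ := h
  exact hle g.2 y

/-- Every dipole vertex on the through face is on the face of `v`. -/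
theorem inr_through (i : Fin 2) (k : Fin 4) (hk : k = 0 ∨ k = bubblePerm c 0) :
    iR G v (i, k) ∈
      MulAction.orbit ((G.insertDipole v).faceGroup c) (iL G v v) := by
  fin_cases i <;> rcases hk with rfl | rfl
  · exact step_inr_q G v c
  · exact step_inr_0a G v c
  · exact step_inr_10 G v c
  · exact step_inr_1a G v c

theorem step_mid_col (i : Fin 2) (k : Fin 4) :
    iR G v (i, bubblePerm c k) ∈
      MulAction.orbit ((G.insertDipole v).faceGroup c) (iR G v (i, k)) := by
  simp only [iR]
  rw [← colPerm_insert_inr G v c (i, k)]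
  exact step_orbit (colPerm_mem_faceGroup _ c) _

theorem step_mid_pair (i : Fin 2) (k : Fin 4) (hk : k ≠ 0) :
    iR G v (Equiv.swap (0 : Fin 2) 1 i, k) ∈
      MulAction.orbit ((G.insertDipole v).faceGroup c) (iR G v (i, k)) := by
  simp only [iR]
  have h : (G.insertDipole v).pairing (inrV G G2 (i, k)) = inrV G G2 (Equiv.swap (0 : Fin 2) 1 i, k) := by
    erw [pairing_insert, glueFun_inrV, if_neg, if_neg]
    · rfl
    · intro h'
      exact hk (congrArg Prod.snd h')
    · intro h'
      exact hk (congrArg Prod.snd h')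
  rw [← h]
  exact step_orbit (pairing_mem_faceGroup _ c) _

/-- Every dipole vertex off the through face is on the new face. -/
theorem inr_new (i : Fin 2) (k : Fin 4) (hk : ¬(k = 0 ∨ k = bubblePerm c 0)) :
    iR G v (i, k) ∈
      MulAction.orbit ((G.insertDipole v).faceGroup c) (iR G v ((0 : Fin 2), pick c)) := by
  have hk0 : k ≠ 0 := fun h => hk (Or.inl h)
  have hbase : iR G v ((0 : Fin 2), k) ∈
      MulAction.orbit ((G.insertDipole v).faceGroup c) (iR G v ((0 : Fin 2), pick c)) := by
    rcases other_spec c k hk with rfl | rfl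
    · exact MulAction.mem_orbit_self _
    · exact step_mid_col G v c 0 (pick c)
  fin_cases i
  · exact hbase
  · refine orbit_trans' ?_ hbase
    have := step_mid_pair G v c 0 k hk0
    simpa using this

/-- Fibers of the class map are contained in single orbits. -/
theorem dipClass_fiber {z w : (G.insertDipole v).V} (h : dipClass G v c z = dipClass G v c w) :
    z ∈ MulAction.orbit ((G.insertDipole v).faceGroup c) w := by
  rcases z with ⟨uz | iz, kz⟩ <;> rcases w with ⟨uw | iw, kw⟩
  · -- inl, inl
    rw [dipClass_inl', dipClass_inl'] at h
    have h' : (Quotient.mk'' (uz, kz) :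
        MulAction.orbitRel.Quotient (G.faceGroup c) G.V) = Quotient.mk'' (uw, kw) :=
      Sum.inl.inj h
    have horb : (uz, kz) ∈ MulAction.orbit (G.faceGroup c) (uw, kw) :=
      MulAction.orbitRel_apply.mp (Quotient.exact' h')
    exact inl_orbit_of_orbit G v c horb
  · -- inl, inr
    rw [dipClass_inl', dipClass_inr'] at h
    by_cases hcond : kw = 0 ∨ kw = bubblePerm c 0
    · rw [if_pos hcond] at h
      have h' : (Quotient.mk'' (uz, kz) :
          MulAction.orbitRel.Quotient (G.faceGroup c) G.V) = Quotient.mk'' v :=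
        Sum.inl.inj h
      have horb : (uz, kz) ∈ MulAction.orbit (G.faceGroup c) v :=
        MulAction.orbitRel_apply.mp (Quotient.exact' h')
      exact orbit_trans' (inl_orbit_of_orbit G v c horb)
        (orbit_symm' (inr_through G v c iw kw hcond))
    · rw [if_neg hcond] at h
      exact absurd h (by simp)
  · -- inr, inl
    rw [dipClass_inr', dipClass_inl'] at h
    by_cases hcond : kz = 0 ∨ kz = bubblePerm c 0
    · rw [if_pos hcond] at h
      have h' : (Quotient.mk'' v :
          MulAction.orbitRel.Quotient (G.faceGroup c) G.V) = Quotient.mk'' (uw, kw) :=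
        Sum.inl.inj h
      have horb : v ∈ MulAction.orbit (G.faceGroup c) (uw, kw) :=
        MulAction.orbitRel_apply.mp (Quotient.exact' h')
      exact orbit_trans' (inr_through G v c iz kz hcond) (inl_orbit_of_orbit G v c horb)
    · rw [if_neg hcond] at h
      exact absurd h (by simp)
  · -- inr, inr
    rw [dipClass_inr', dipClass_inr'] at h
    by_cases hz : kz = 0 ∨ kz = bubblePerm c 0 <;> by_cases hw : kw = 0 ∨ kw = bubblePerm c 0
    · exact orbit_trans' (inr_through G v c iz kz hz)
        (orbit_symm' (inr_through G v c iw kw hw))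
    · rw [if_pos hz, if_neg hw] at h
      exact absurd h (by simp)
    · rw [if_neg hz, if_pos hw] at h
      exact absurd h (by simp)
    · exact orbit_trans' (inr_new G v c iz kz hz) (orbit_symm' (inr_new G v c iw kw hw))

/-- The descended class map on face quotients. -/
noncomputable def dipClassQ :
    MulAction.orbitRel.Quotient ((G.insertDipole v).faceGroup c) (G.insertDipole v).V →
      (MulAction.orbitRel.Quotient (G.faceGroup c) G.V) ⊕ Unit :=
  fun q => Quotient.liftOn' q (dipClass G v c) (fun a b hab => by
    obtain ⟨g, rfl⟩ := MulAction.orbitRel_apply.mp hab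
    exact dipClass_invariant G v c g.2 b)

theorem dipClassQ_mk (z : (G.insertDipole v).V) :
    dipClassQ G v c (Quotient.mk'' z) = dipClass G v c z := rfl

theorem dipClassQ_bijective : Function.Bijective (dipClassQ G v c) := by
  constructor
  · intro qa qb
    refine Quotient.inductionOn₂' qa qb ?_
    intro a b h
    rw [dipClassQ_mk, dipClassQ_mk] at h
    exact Quotient.sound' (MulAction.orbitRel_apply.mpr (dipClass_fiber G v c h))
  · intro s
    rcases s with qx | u
    · refine Quotient.inductionOn' qx ?_
      intro x
      refine ⟨Quotient.mk'' (inlV G G2 x), ?_⟩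
      erw [dipClassQ_mk, dipClass_inl]
    · cases u
      refine ⟨Quotient.mk'' (inrV G G2 ((0 : Fin 2), pick c)), ?_⟩
      erw [dipClassQ_mk, dipClass_inr, if_neg (pick_spec c)]

/-- The face quotient of the inserted graph splits as the faces of `G` plus one
new face. -/
noncomputable def dipEquiv :
    MulAction.orbitRel.Quotient ((G.insertDipole v).faceGroup c) (G.insertDipole v).V ≃
      (MulAction.orbitRel.Quotient (G.faceGroup c) G.V) ⊕ Unit :=
  Equiv.ofBijective _ (dipClassQ_bijective G v c)

theorem numFaces_insert : (G.insertDipole v).numFaces c = G.numFaces c + 1 := by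
  unfold TGraph.numFaces
  rw [Nat.card_congr (dipEquiv G v c), Nat.card_sum]
  simp

end Main

end DipoleAux

/-- Insertion of a melonic dipole on a color-0 edge of a graph
`G` of the tetrahedral model increases the number of bubbles by 2 and the
total number of faces by exactly 3. -/
theorem insertDipole_bubbles_faces (G : TGraph) (v : G.V) :
    (G.insertDipole v).b = G.b + 2 ∧ (G.insertDipole v).F = G.F + 3 := by
  constructor
  · show Fintype.card (G.B ⊕ Fin 2) = Fintype.card G.B + 2
    rw [Fintype.card_sum, Fintype.card_fin]
  · show ∑ c : Fin 3, (G.insertDipole v).numFaces c = (∑ c : Fin 3, G.numFaces c) + 3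
    simp [DipoleAux.numFaces_insert, Finset.sum_add_distrib]
end

section
/- Let {e_L, e_R} be two color-0 edges of G not forming a 2-edge-cut, and let c ∈ {1,2,3}. If the two edges lie on two distinct faces of color c (F_c^{{e_L,e_R}}(G) = 2), then both possible flips merge these faces: F_c(G') = F_c(G) − 1. If they lie on a single common face of color c (F_c^{{e_L,e_R}}(G) = 1), then one of the two flips splits this face, giving F_c(G') = F_c(G) + 1, while the other flip leaves F_c unchanged. -/
/-!  A combinatorial model of the Feynman graphs of the rank-3 tetrahedral
(`O(N)^3`) tensor model.

A graph consists of a finite set `B` of bubbles (copies of the tetrahedron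
`K_4`); each bubble has four vertices, so the vertex set is `B × Fin 4`.
Inside every bubble the edges of colors `1,2,3` are given once and for all by
the three fixed-point-free involutions of `Fin 4` (the proper 3-edge-coloring
of `K_4`).  The color-0 propagator edges, one per vertex, are encoded by a
fixed-point-free involution `pairing` of the vertex set. -/

open Equiv

open TGraph

open TGraph

set_option linter.unusedSectionVars false
set_option linter.unnecessarySimpa false

open Equiv Equiv.Perm

namespace FlipAux

variable {α : Type*} [Fintype α] [DecidableEq α]

/-- The setoid of being on the same cycle of a permutation. -/
def cycS (σ : Perm α) : Setoid α :=
  ⟨σ.SameCycle, ⟨SameCycle.refl σ, SameCycle.symm, SameCycle.trans⟩⟩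

/-- The number of cycles (orbits, including fixed points) of a permutation. -/
noncomputable def ncyc (σ : Perm α) : ℕ := Nat.card (Quotient (cycS σ))

theorem sameCycle_subrel {σ : Perm α} {r : α → α → Prop} (hr : Equivalence r)
    (h : ∀ x, r x (σ x)) {x y : α} (hxy : σ.SameCycle x y) : r x y := by
  have key : ∀ (i : ℕ) (z : α), r z ((σ ^ i) z) := by
    intro i
    induction i with
    | zero => intro z; simpa using hr.refl z
    | succ n ih =>
      intro z
      have h1 : r z (σ z) := h z
      have h2 : r (σ z) ((σ ^ n) (σ z)) := ih (σ z)
      have e : (σ ^ (n + 1)) z = (σ ^ n) (σ z) := by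
        rw [pow_succ, Equiv.Perm.mul_apply]
      rw [e]
      exact hr.trans h1 h2
  obtain ⟨i, -, rfl⟩ := hxy.exists_pow_eq'
  exact key i x

theorem mul_swap_apply_of_ne (σ : Perm α) {a b z : α} (h1 : z ≠ a) (h2 : z ≠ b) :
    (σ * swap a b) z = σ z := by
  simp [Equiv.Perm.mul_apply, swap_apply_of_ne_of_ne h1 h2]

theorem mul_swap_apply_left (σ : Perm α) (a b : α) : (σ * swap a b) a = σ b := by
  simp [Equiv.Perm.mul_apply]

theorem mul_swap_apply_right (σ : Perm α) (a b : α) : (σ * swap a b) b = σ a := by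
  simp [Equiv.Perm.mul_apply]

/-- Key induction: as long as the `σ`-cycle of `b` avoids `a` and does not return
to `b`, the `(σ * swap a b)`-orbit of `a` follows the `σ`-orbit of `b`. -/
theorem mul_swap_pow_apply (σ : Perm α) {a b : α} {K : ℕ}
    (hA : ∀ j, 1 ≤ j → j < K → (σ ^ j) b ≠ a)
    (hB : ∀ j, 1 ≤ j → j < K → (σ ^ j) b ≠ b) :
    ∀ j, 1 ≤ j → j < K → ((σ * swap a b) ^ j) a = (σ ^ j) b := by
  intro j
  induction j with
  | zero => omega
  | succ n ih =>
    intro _ hlt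
    rcases Nat.eq_zero_or_pos n with hn | hn
    · subst hn
      simpa using mul_swap_apply_left σ a b
    · have ihn := ih hn (by omega)
      have hna : (σ ^ n) b ≠ a := hA n hn (by omega)
      have hnb : (σ ^ n) b ≠ b := hB n hn (by omega)
      have e1 : ((σ * swap a b) ^ (n + 1)) a = (σ * swap a b) (((σ * swap a b) ^ n) a) := by
        rw [pow_succ', Equiv.Perm.mul_apply]
      rw [e1, ihn, mul_swap_apply_of_ne σ hna hnb, pow_succ', Equiv.Perm.mul_apply]

/-- Merging: if `a`, `b` are on distinct cycles of `σ` then they are on the same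
cycle of `σ * swap a b`. -/
theorem sameCycle_mul_swap (σ : Perm α) {a b : α} (hab : ¬ σ.SameCycle a b) :
    (σ * swap a b).SameCycle a b := by
  classical
  have hex : ∃ n : ℕ, (σ ^ (n + 1)) b = b := by
    refine ⟨orderOf σ - 1, ?_⟩
    have h1 : 1 ≤ orderOf σ := orderOf_pos σ
    have h2 : orderOf σ - 1 + 1 = orderOf σ := by omega
    rw [h2, pow_orderOf_eq_one]; rfl
  set K : ℕ := Nat.find hex + 1 with hKdef
  have hK : (σ ^ K) b = b := Nat.find_spec hex
  have hmin : ∀ j, 1 ≤ j → j < K → (σ ^ j) b ≠ b := by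
    intro j h1 h2 h3
    have h4 := Nat.find_min hex (m := j - 1) (by omega)
    apply h4
    have h5 : j - 1 + 1 = j := by omega
    rw [h5]; exact h3
  have hA : ∀ j, 1 ≤ j → j < K + 1 → (σ ^ j) b ≠ a := by
    intro j _ _ h
    exact hab (SameCycle.symm ⟨(j : ℤ), by rw [zpow_natCast]; exact h⟩)
  have key : ((σ * swap a b) ^ K) a = b := by
    rcases Nat.lt_or_ge K 2 with hK2 | hK2
    · have hK1 : K = 1 := by omega
      rw [hK1, pow_one, mul_swap_apply_left]
      rw [hK1, pow_one] at hK; exact hK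
    · have h1 := mul_swap_pow_apply σ (fun j a b c => hA j a (by omega) c) hmin
        (K - 1) (by omega) (by omega)
      have hna : (σ ^ (K - 1)) b ≠ a := hA (K - 1) (by omega) (by omega)
      have hnb : (σ ^ (K - 1)) b ≠ b := hmin (K - 1) (by omega) (by omega)
      have e1 : ((σ * swap a b) ^ K) a = (σ * swap a b) (((σ * swap a b) ^ (K - 1)) a) := by
        conv_lhs => rw [show K = (K - 1) + 1 by omega, pow_succ', Equiv.Perm.mul_apply]
      rw [e1, h1, mul_swap_apply_of_ne σ hna hnb]
      have e2 : σ ((σ ^ (K - 1)) b) = (σ ^ K) b := by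
        conv_rhs => rw [show K = (K - 1) + 1 by omega, pow_succ', Equiv.Perm.mul_apply]
      rw [e2]; exact hK
  exact ⟨(K : ℤ), by rw [zpow_natCast]; exact key⟩

/-- Splitting: if `a ≠ b` are on the same cycle of `σ` then they are on distinct
cycles of `σ * swap a b`. -/
theorem not_sameCycle_mul_swap (σ : Perm α) {a b : α} (hab : σ.SameCycle a b)
    (hne : a ≠ b) : ¬ (σ * swap a b).SameCycle a b := by
  classical
  have hex : ∃ n : ℕ, (σ ^ n) b = a := by
    obtain ⟨i, -, hi⟩ := hab.symm.exists_pow_eq'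
    exact ⟨i, hi⟩
  set M : ℕ := Nat.find hex with hMdef
  have hM : (σ ^ M) b = a := Nat.find_spec hex
  have hM1 : 1 ≤ M := by
    rcases Nat.eq_zero_or_pos M with h | h
    · rw [h] at hM; exact absurd (by simpa using hM.symm) hne
    · exact h
  have hminA : ∀ j, j < M → (σ ^ j) b ≠ a := fun j hj => Nat.find_min hex hj
  have hminB : ∀ j, 1 ≤ j → j < M → (σ ^ j) b ≠ b := by
    intro j h1 h2 h3
    have e : (σ ^ (M - j)) b = a := by
      have e2 : (σ ^ (M - j)) ((σ ^ j) b) = (σ ^ M) b := by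
        rw [← Equiv.Perm.mul_apply, ← pow_add]
        congr 2
        omega
      rw [h3] at e2
      rw [e2]; exact hM
    exact hminA (M - j) (by omega) e
  have claim := mul_swap_pow_apply σ (fun j h1 h2 => hminA j h2) hminB
  -- the (σ * swap a b)-orbit of a has period M and avoids b
  have hper : ((σ * swap a b) ^ M) a = a := by
    rcases Nat.lt_or_ge M 2 with h2 | h2
    · have hM1' : M = 1 := by omega
      rw [hM1', pow_one, mul_swap_apply_left]
      rw [hM1', pow_one] at hM; exact hM
    · have h1 := claim (M - 1) (by omega) (by omega)
      have hna : (σ ^ (M - 1)) b ≠ a := hminA (M - 1) (by omega)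
      have hnb : (σ ^ (M - 1)) b ≠ b := hminB (M - 1) (by omega) (by omega)
      have e1 : ((σ * swap a b) ^ M) a = (σ * swap a b) (((σ * swap a b) ^ (M - 1)) a) := by
        conv_lhs => rw [show M = (M - 1) + 1 by omega, pow_succ', Equiv.Perm.mul_apply]
      rw [e1, h1, mul_swap_apply_of_ne σ hna hnb]
      have e2 : σ ((σ ^ (M - 1)) b) = (σ ^ M) b := by
        conv_rhs => rw [show M = (M - 1) + 1 by omega, pow_succ', Equiv.Perm.mul_apply]
      rw [e2]; exact hM
  intro hS
  obtain ⟨i, -, hi⟩ := hS.exists_pow_eq'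
  have hper' : ∀ q : ℕ, ((σ * swap a b) ^ (M * q)) a = a := by
    intro q
    induction q with
    | zero => simp
    | succ n ih =>
      have e : M * (n + 1) = M * n + M := by ring
      rw [e, pow_add, Equiv.Perm.mul_apply, hper, ih]
  have hred : ((σ * swap a b) ^ (i % M)) a = b := by
    have e : ((σ * swap a b) ^ i) a = ((σ * swap a b) ^ (i % M)) a := by
      conv_lhs => rw [(Nat.mod_add_div i M).symm, pow_add,
        Equiv.Perm.mul_apply, hper' (i / M)]
    rw [← e]; exact hi
  rcases Nat.eq_zero_or_pos (i % M) with h0 | h0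
  · rw [h0] at hred; simp at hred; exact hne hred
  · have hlt : i % M < M := Nat.mod_lt i (by omega)
    have := claim (i % M) h0 hlt
    rw [this] at hred
    exact hminB (i % M) h0 hlt hred

/-- Characterization of `SameCycle` after merging two distinct cycles. -/
theorem sameCycle_mul_swap_iff (σ : Perm α) {a b : α} (hab : ¬ σ.SameCycle a b)
    (x y : α) :
    (σ * swap a b).SameCycle x y ↔
      σ.SameCycle x y ∨ (σ.SameCycle x a ∧ σ.SameCycle y b) ∨
        (σ.SameCycle x b ∧ σ.SameCycle y a) := by
  set r : α → α → Prop := fun x y =>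
    σ.SameCycle x y ∨ (σ.SameCycle x a ∧ σ.SameCycle y b) ∨
      (σ.SameCycle x b ∧ σ.SameCycle y a) with hr
  have hrE : Equivalence r := by
    constructor
    · intro z; exact Or.inl (SameCycle.refl σ z)
    · rintro z w (h | ⟨h1, h2⟩ | ⟨h1, h2⟩)
      · exact Or.inl h.symm
      · exact Or.inr (Or.inr ⟨h2, h1⟩)
      · exact Or.inr (Or.inl ⟨h2, h1⟩)
    · rintro x y z (h | ⟨h1, h2⟩ | ⟨h1, h2⟩) (g | ⟨g1, g2⟩ | ⟨g1, g2⟩)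
      · exact Or.inl (h.trans g)
      · exact Or.inr (Or.inl ⟨h.trans g1, g2⟩)
      · exact Or.inr (Or.inr ⟨h.trans g1, g2⟩)
      · exact Or.inr (Or.inl ⟨h1, g.symm.trans h2⟩)
      · exact absurd (g1.symm.trans h2) hab
      · exact Or.inl (h1.trans g2.symm)
      · exact Or.inr (Or.inr ⟨h1, g.symm.trans h2⟩)
      · exact Or.inl (h1.trans g2.symm)
      · exact absurd (h2.symm.trans g1) hab
  constructor
  · intro hxy
    refine sameCycle_subrel hrE ?_ hxy
    intro z
    by_cases hza : z = a
    · rw [hza, mul_swap_apply_left]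
      exact Or.inr (Or.inl ⟨SameCycle.refl σ a, SameCycle.symm (⟨1, by simp⟩ : σ.SameCycle b (σ b))⟩)
    · by_cases hzb : z = b
      · rw [hzb, mul_swap_apply_right]
        exact Or.inr (Or.inr ⟨SameCycle.refl σ b, SameCycle.symm (⟨1, by simp⟩ : σ.SameCycle a (σ a))⟩)
      · rw [mul_swap_apply_of_ne σ hza hzb]
        exact Or.inl ⟨1, by simp⟩
  · have hS' : (σ * swap a b).SameCycle a b := sameCycle_mul_swap σ hab
    have mono : ∀ {x y : α}, σ.SameCycle x y → (σ * swap a b).SameCycle x y := by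
      intro x y h
      refine sameCycle_subrel (SameCycle.equivalence (σ * swap a b)) ?_ h
      intro z
      by_cases hza : z = a
      · rw [hza]
        have h1 : (σ * swap a b).SameCycle b (σ a) := ⟨1, by simp [mul_swap_apply_right]⟩
        exact hS'.trans h1
      · by_cases hzb : z = b
        · rw [hzb]
          have h1 : (σ * swap a b).SameCycle a (σ b) := ⟨1, by simp [mul_swap_apply_left]⟩
          exact hS'.symm.trans h1
        · exact ⟨1, by simp [mul_swap_apply_of_ne σ hza hzb]⟩
    rintro (h | ⟨h1, h2⟩ | ⟨h1, h2⟩)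
    · exact mono h
    · exact ((mono h1).trans hS').trans (mono h2).symm
    · exact ((mono h1).trans hS'.symm).trans (mono h2).symm

theorem card_ne_add_one {β : Type*} [Finite β] (b : β) :
    Nat.card {q : β // q ≠ b} + 1 = Nat.card β := by
  classical
  cases nonempty_fintype β
  rw [Nat.card_eq_fintype_card, Nat.card_eq_fintype_card]
  have h1 : Fintype.card {q : β // q ≠ b} = Fintype.card {q : β // ¬ q = b} := rfl
  rw [h1, Fintype.card_subtype_compl, Fintype.card_subtype_eq]
  have h2 : 1 ≤ Fintype.card β := Fintype.card_pos_iff.2 ⟨b⟩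
  omega

/-- Merging two distinct cycles decreases the number of cycles by one. -/
theorem ncyc_merge (σ : Perm α) {a b : α} (hab : ¬ σ.SameCycle a b) :
    ncyc (σ * swap a b) + 1 = ncyc σ := by
  classical
  have hmk : ∀ x y : α, (Quotient.mk (cycS σ) x = Quotient.mk (cycS σ) y) ↔ σ.SameCycle x y :=
    fun x y => ⟨fun h => Quotient.exact h, fun h => Quotient.sound h⟩
  have hmk' : ∀ x y : α,
      (Quotient.mk (cycS (σ * swap a b)) x = Quotient.mk (cycS (σ * swap a b)) y) ↔
        (σ * swap a b).SameCycle x y :=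
    fun x y => ⟨fun h => Quotient.exact h, fun h => Quotient.sound h⟩
  have key := sameCycle_mul_swap_iff σ hab
  have hQab : Quotient.mk (cycS σ) a ≠ Quotient.mk (cycS σ) b := fun h => hab ((hmk a b).1 h)
  let g : α → {q : Quotient (cycS σ) // q ≠ Quotient.mk (cycS σ) b} := fun x =>
    if h : σ.SameCycle x b then ⟨Quotient.mk (cycS σ) a, hQab⟩
    else ⟨Quotient.mk (cycS σ) x, fun hc => h ((hmk x b).1 hc)⟩
  have hg : ∀ x y : α, (σ * swap a b).SameCycle x y → g x = g y := by
    intro x y hxy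
    rcases (key x y).1 hxy with h | ⟨h1, h2⟩ | ⟨h1, h2⟩
    · by_cases hxb : σ.SameCycle x b
      · have hyb : σ.SameCycle y b := h.symm.trans hxb
        simp only [g, dif_pos hxb, dif_pos hyb]
      · have hyb : ¬ σ.SameCycle y b := fun hc => hxb (h.trans hc)
        simp only [g, dif_neg hxb, dif_neg hyb]
        exact Subtype.ext (Quotient.sound h)
    · have hxb : ¬ σ.SameCycle x b := fun hc => hab (h1.symm.trans hc)
      simp only [g, dif_neg hxb, dif_pos h2]
      exact Subtype.ext (Quotient.sound h1)
    · have hyb : ¬ σ.SameCycle y b := fun hc => hab (h2.symm.trans hc)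
      simp only [g, dif_pos h1, dif_neg hyb]
      exact Subtype.ext (Quotient.sound h2.symm)
  let f : Quotient (cycS (σ * swap a b)) → {q : Quotient (cycS σ) // q ≠ Quotient.mk (cycS σ) b} :=
    Quotient.lift g hg
  have hsurj : Function.Surjective f := by
    rintro ⟨q, hq⟩
    induction q using Quotient.inductionOn with
    | _ x =>
      refine ⟨Quotient.mk (cycS (σ * swap a b)) x, ?_⟩
      have hxb : ¬ σ.SameCycle x b := fun h => hq (Quotient.sound h)
      show g x = _
      simp only [g, dif_neg hxb]
  have hinj : Function.Injective f := by
    intro q1 q2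
    induction q1 using Quotient.inductionOn with
    | _ x =>
      induction q2 using Quotient.inductionOn with
      | _ y =>
        intro hf
        change g x = g y at hf
        apply Quotient.sound
        by_cases hxb : σ.SameCycle x b <;> by_cases hyb : σ.SameCycle y b
        · exact (key x y).2 (Or.inl (hxb.trans hyb.symm))
        · simp only [g, dif_pos hxb, dif_neg hyb] at hf
          have := (hmk a y).1 (congrArg Subtype.val hf)
          exact (key x y).2 (Or.inr (Or.inr ⟨hxb, this.symm⟩))
        · simp only [g, dif_neg hxb, dif_pos hyb] at hf
          have := (hmk x a).1 (congrArg Subtype.val hf)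
          exact (key x y).2 (Or.inr (Or.inl ⟨this, hyb⟩))
        · simp only [g, dif_neg hxb, dif_neg hyb] at hf
          have := (hmk x y).1 (congrArg Subtype.val hf)
          exact (key x y).2 (Or.inl this)
  have e1 : Nat.card (Quotient (cycS (σ * swap a b))) =
      Nat.card {q : Quotient (cycS σ) // q ≠ Quotient.mk (cycS σ) b} :=
    Nat.card_congr (Equiv.ofBijective f ⟨hinj, hsurj⟩)
  unfold ncyc
  rw [e1, card_ne_add_one]

/-- Splitting a cycle increases the number of cycles by one. -/
theorem ncyc_split (σ : Perm α) {a b : α} (hab : σ.SameCycle a b) (hne : a ≠ b) :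
    ncyc (σ * swap a b) = ncyc σ + 1 := by
  have h1 : ¬ (σ * swap a b).SameCycle a b := not_sameCycle_mul_swap σ hab hne
  have h2 := ncyc_merge (σ * swap a b) h1
  rw [mul_assoc, swap_mul_self, mul_one] at h2
  omega

section Faces

variable (p m : Perm α)

theorem perm_inv_eq (hp2 : ∀ v, p (p v) = v) : p⁻¹ = p := by
  have hpp : p * p = 1 := by
    ext v
    simp [Equiv.Perm.mul_apply, hp2]
  exact inv_eq_of_mul_eq_one_left hpp

theorem conj_apply (hp2 : ∀ v, p (p v) = v) (hm2 : ∀ v, m (m v) = v) (i : ℤ) (x : α) :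
    ((m * p) ^ (-i)) (p x) = p (((m * p) ^ i) x) := by
  have hpinv : p⁻¹ = p := perm_inv_eq p hp2
  have hminv : m⁻¹ = m := perm_inv_eq m hm2
  have hconj : p * (m * p) * p⁻¹ = (m * p)⁻¹ := by
    rw [hpinv, mul_inv_rev, hpinv, hminv]
    have hpp : p * p = 1 := by ext v; simp [Equiv.Perm.mul_apply, hp2]
    calc p * (m * p) * p = p * m * (p * p) := by group
    _ = p * m := by rw [hpp, mul_one]
  have h1 : (m * p) ^ (-i) = p * ((m * p) ^ i) * p⁻¹ := by
    rw [zpow_neg, ← inv_zpow, ← hconj, conj_zpow]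
  rw [h1]
  simp only [Equiv.Perm.mul_apply, Equiv.Perm.inv_def, Equiv.symm_apply_apply]

theorem sameCycle_conj (hp2 : ∀ v, p (p v) = v) (hm2 : ∀ v, m (m v) = v) {x y : α}
    (h : (m * p).SameCycle x y) : (m * p).SameCycle (p x) (p y) := by
  obtain ⟨i, hi⟩ := h
  exact ⟨-i, by rw [conj_apply p m hp2 hm2, hi]⟩

theorem sameCycle_conj_iff (hp2 : ∀ v, p (p v) = v) (hm2 : ∀ v, m (m v) = v) (x y : α) :
    (m * p).SameCycle (p x) (p y) ↔ (m * p).SameCycle x y := by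
  constructor
  · intro h
    have := sameCycle_conj p m hp2 hm2 h
    rwa [hp2, hp2] at this
  · exact sameCycle_conj p m hp2 hm2

theorem m_eq (hp2 : ∀ v, p (p v) = v) : ∀ y, m y = (m * p) (p y) := by
  intro y
  rw [Equiv.Perm.mul_apply, hp2]

/-- The `σ = m * p` orbit of a point never contains its image under `p`. -/
theorem not_sameCycle_pairing (hp2 : ∀ v, p (p v) = v) (hpf : ∀ v, p v ≠ v)
    (hm2 : ∀ v, m (m v) = v) (hmf : ∀ v, m v ≠ v) (x : α) :
    ¬ (m * p).SameCycle x (p x) := by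
  rintro ⟨k, hk⟩
  have pfix : ∀ j : ℤ, p (((m * p) ^ j) x) = ((m * p) ^ (k - j)) x := by
    intro j
    have h1 : ((m * p) ^ (-j)) (p x) = p (((m * p) ^ j) x) := conj_apply p m hp2 hm2 j x
    rw [← h1, ← hk, ← Equiv.Perm.mul_apply, ← zpow_add, show -j + k = k - j by ring]
  rcases Int.even_or_odd k with ⟨j, hj⟩ | ⟨j, hj⟩
  · -- k = j + j : p fixes (m*p)^j x
    apply hpf (((m * p) ^ j) x)
    rw [pfix j, show k - j = j by omega]
  · -- k = 2*j + 1 : m fixes (m*p)^(j+1) x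
    apply hmf (((m * p) ^ (j + 1)) x)
    rw [m_eq p m hp2, pfix (j + 1), ← Equiv.Perm.mul_apply, ← zpow_one_add,
      show (1 : ℤ) + (k - (j + 1)) = j + 1 by omega]

/-- The orbits of the group generated by `p` and `m` are unions of a cycle of
`m * p` and its image under `p`. -/
theorem mem_faceOrbit_iff (hp2 : ∀ v, p (p v) = v) (hm2 : ∀ v, m (m v) = v) (x v : α) :
    x ∈ MulAction.orbit (Subgroup.closure {p, m} : Subgroup (Perm α)) v ↔
      (m * p).SameCycle x v ∨ (m * p).SameCycle x (p v) := by
  set S := (m * p).SameCycle with hS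
  set r : α → α → Prop := fun x y => S x y ∨ S x (p y) with hrdef
  have hrsymm : ∀ {x y}, r x y → r y x := by
    rintro x y (h | h)
    · exact Or.inl h.symm
    · refine Or.inr ?_
      have := sameCycle_conj p m hp2 hm2 h
      rw [hp2] at this
      exact this.symm
  have hrtrans : ∀ {x y z}, r x y → r y z → r x z := by
    rintro x y z (h | h) (g | g)
    · exact Or.inl (h.trans g)
    · exact Or.inr (h.trans g)
    · refine Or.inr ?_
      exact h.trans (sameCycle_conj p m hp2 hm2 g)
    · have := sameCycle_conj p m hp2 hm2 g
      rw [hp2] at this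
      exact Or.inl (h.trans this)
  constructor
  · rintro ⟨⟨g, hg⟩, rfl⟩
    have key : ∀ (g : Perm α), g ∈ Subgroup.closure ({p, m} : Set (Perm α)) →
        ∀ v, r (g v) v := by
      intro g hg
      refine Subgroup.closure_induction ?_ ?_ ?_ ?_ hg
      · rintro g (h | h) v <;> rw [h]
        · exact Or.inr (SameCycle.refl _ _)
        · refine Or.inr (SameCycle.symm ⟨1, ?_⟩)
          rw [zpow_one, ← m_eq p m hp2]
      · intro v; exact Or.inl (SameCycle.refl _ _)
      · intro g h _ _ hg hh v
        have h1 : r (g (h v)) (h v) := hg (h v)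
        have h2 : r (h v) v := hh v
        exact hrtrans h1 h2
      · intro g _ hg v
        have h1 : r (g (g⁻¹ v)) (g⁻¹ v) := hg (g⁻¹ v)
        rw [Equiv.Perm.inv_def, Equiv.apply_symm_apply] at h1
        exact hrsymm h1
    exact key g hg v
  · have hψ : (m * p) ∈ Subgroup.closure ({p, m} : Set (Perm α)) :=
      mul_mem (Subgroup.subset_closure (Or.inr rfl)) (Subgroup.subset_closure (Or.inl rfl))
    have hp : p ∈ Subgroup.closure ({p, m} : Set (Perm α)) :=
      Subgroup.subset_closure (Or.inl rfl)
    rintro (⟨i, hi⟩ | ⟨i, hi⟩)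
    · refine MulAction.mem_orbit_iff.2 ⟨⟨(m * p) ^ (-i), zpow_mem hψ _⟩, ?_⟩
      show ((m * p) ^ (-i)) v = x
      rw [← hi, ← Equiv.Perm.mul_apply, ← zpow_add]
      simp
    · refine MulAction.mem_orbit_iff.2 ⟨⟨(m * p) ^ (-i) * p, mul_mem (zpow_mem hψ _) hp⟩, ?_⟩
      show ((m * p) ^ (-i)) (p v) = x
      rw [← hi, ← Equiv.Perm.mul_apply, ← zpow_add]
      simp

/-- The number of cycles of `m * p` is twice the number of faces. -/
theorem ncyc_eq_two_mul (hp2 : ∀ v, p (p v) = v) (hpf : ∀ v, p v ≠ v)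
    (hm2 : ∀ v, m (m v) = v) (hmf : ∀ v, m v ≠ v) :
    ncyc (m * p) = 2 * Nat.card
      (MulAction.orbitRel.Quotient (Subgroup.closure {p, m} : Subgroup (Perm α)) α) := by
  classical
  set ψ := m * p with hψ
  set H : Subgroup (Perm α) := Subgroup.closure {p, m} with hH
  have hrel : ∀ x y : α, ψ.SameCycle x y → (MulAction.orbitRel H α).r x y := by
    intro x y h
    rw [MulAction.orbitRel_apply]
    exact (mem_faceOrbit_iff p m hp2 hm2 x y).2 (Or.inl h)
  let f : Quotient (cycS ψ) → MulAction.orbitRel.Quotient H α :=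
    Quotient.lift (fun x => Quotient.mk (MulAction.orbitRel H α) x)
      (fun x y h => Quotient.sound (hrel x y h))
  have hfiber : ∀ x z : α, f (Quotient.mk (cycS ψ) z) = Quotient.mk (MulAction.orbitRel H α) x ↔
      ψ.SameCycle z x ∨ ψ.SameCycle z (p x) := by
    intro x z
    constructor
    · intro h
      have h2 : (MulAction.orbitRel H α).r z x := Quotient.exact h
      rw [MulAction.orbitRel_apply] at h2
      exact (mem_faceOrbit_iff p m hp2 hm2 z x).1 h2
    · intro h
      apply Quotient.sound
      show (MulAction.orbitRel H α).r z x
      rw [MulAction.orbitRel_apply]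
      exact (mem_faceOrbit_iff p m hp2 hm2 z x).2 h
  letI : Fintype (Quotient (cycS ψ)) := Fintype.ofFinite _
  letI : Fintype (MulAction.orbitRel.Quotient H α) := Fintype.ofFinite _
  rw [ncyc, Nat.card_eq_fintype_card, Nat.card_eq_fintype_card]
  rw [← Finset.card_univ (α := Quotient (cycS ψ))]
  rw [Finset.card_eq_sum_card_fiberwise (f := f) (t := Finset.univ)
    (fun x _ => Finset.mem_univ (f x))]
  have hcard : ∀ q : MulAction.orbitRel.Quotient H α,
      (Finset.univ.filter fun z => f z = q).card = 2 := by
    intro q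
    induction q using Quotient.inductionOn with
    | _ x =>
      have hset : (Finset.univ.filter fun z => f z = Quotient.mk (MulAction.orbitRel H α) x) =
          {Quotient.mk (cycS ψ) x, Quotient.mk (cycS ψ) (p x)} := by
        ext z
        induction z using Quotient.inductionOn with
        | _ z =>
          simp only [Finset.mem_filter, Finset.mem_univ, true_and, Finset.mem_insert,
            Finset.mem_singleton]
          rw [hfiber x z]
          constructor
          · rintro (h | h)
            · exact Or.inl (Quotient.sound h)
            · exact Or.inr (Quotient.sound h)
          · rintro (h | h)
            · exact Or.inl (Quotient.exact h)
            · exact Or.inr (Quotient.exact h)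
      rw [hset]
      rw [Finset.card_insert_of_notMem, Finset.card_singleton]
      rw [Finset.mem_singleton]
      intro hc
      have h2 : ψ.SameCycle x (p x) := Quotient.exact hc
      exact not_sameCycle_pairing p m hp2 hpf hm2 hmf x h2
  rw [Finset.sum_congr rfl (fun q _ => hcard q)]
  rw [Finset.sum_const, Finset.card_univ, smul_eq_mul, mul_comm]

/-- Core counting argument for the effect of the two flips on the number of
cycles of `m * p`. -/
theorem flip_core (hp2 : ∀ v, p (p v) = v) (hpf : ∀ v, p v ≠ v)
    (hm2 : ∀ v, m (m v) = v) (hmf : ∀ v, m v ≠ v) (u w : α)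
    (hw1 : w ≠ u) (hw2 : w ≠ p u) :
    (¬ ((m * p).SameCycle u w ∨ (m * p).SameCycle u (p w)) →
      ncyc (m * p * swap u (p w) * swap (p u) w) + 2 = ncyc (m * p) ∧
        ncyc (m * p * swap u w * swap (p u) (p w)) + 2 = ncyc (m * p)) ∧
    (((m * p).SameCycle u w ∨ (m * p).SameCycle u (p w)) →
      (ncyc (m * p * swap u (p w) * swap (p u) w) = ncyc (m * p) + 2 ∧
        ncyc (m * p * swap u w * swap (p u) (p w)) = ncyc (m * p)) ∨
      (ncyc (m * p * swap u (p w) * swap (p u) w) = ncyc (m * p) ∧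
        ncyc (m * p * swap u w * swap (p u) (p w)) = ncyc (m * p) + 2)) := by
  set ψ := m * p with hψdef
  set a := p u with hadef
  set b := p w with hbdef
  have hSconj : ∀ x y : α, ψ.SameCycle (p x) (p y) ↔ ψ.SameCycle x y :=
    sameCycle_conj_iff p m hp2 hm2
  have hP3 : ∀ x : α, ¬ ψ.SameCycle x (p x) :=
    not_sameCycle_pairing p m hp2 hpf hm2 hmf
  have hSua : ¬ ψ.SameCycle u a := hP3 u
  have hSwb : ¬ ψ.SameCycle w b := hP3 w
  have hpa : p a = u := hp2 u
  have hpb : p b = w := hp2 w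
  have hSaw_iff : ψ.SameCycle a w ↔ ψ.SameCycle u b := by
    rw [← hSconj a w, hpa, ← hbdef]
  have hSab_iff : ψ.SameCycle a b ↔ ψ.SameCycle u w := by
    rw [← hSconj a b, hpa, hpb]
  have hub : u ≠ b := by
    intro h
    apply hw2
    rw [hadef, h, hpb]
  have haw : a ≠ w := fun h => hw2 h.symm
  have hab : a ≠ b := by
    intro h
    apply hw1
    rw [← hpa, h, hpb]
  have huw : u ≠ w := fun h => hw1 h.symm
  constructor
  · rintro hn
    push_neg at hn
    obtain ⟨hP, hQ⟩ := hn
    constructor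
    · -- flip 1 : merge twice
      have m1 : ncyc (ψ * swap u b) + 1 = ncyc ψ := ncyc_merge ψ hQ
      have hchar := sameCycle_mul_swap_iff ψ hQ
      have hnaw : ¬ (ψ * swap u b).SameCycle a w := by
        intro h
        rcases (hchar a w).1 h with h' | ⟨h1, h2⟩ | ⟨h1, h2⟩
        · exact hQ (hSaw_iff.1 h')
        · exact hSua h1.symm
        · exact hP (hSab_iff.1 h1)
      have m2 : ncyc (ψ * swap u b * swap a w) + 1 = ncyc (ψ * swap u b) :=
        ncyc_merge (ψ * swap u b) hnaw
      omega
    · -- flip 2 : merge twice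
      have m1 : ncyc (ψ * swap u w) + 1 = ncyc ψ := ncyc_merge ψ hP
      have hchar := sameCycle_mul_swap_iff ψ hP
      have hnab : ¬ (ψ * swap u w).SameCycle a b := by
        intro h
        rcases (hchar a b).1 h with h' | ⟨h1, h2⟩ | ⟨h1, h2⟩
        · exact hP (hSab_iff.1 h')
        · exact hSua h1.symm
        · exact hQ (hSaw_iff.1 h1)
      have m2 : ncyc (ψ * swap u w * swap a b) + 1 = ncyc (ψ * swap u w) :=
        ncyc_merge (ψ * swap u w) hnab
      omega
  · rintro (hP | hQ)
    · -- on the same cycle via `u ~ w` : flip 1 keeps, flip 2 splits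
      right
      have hQn : ¬ ψ.SameCycle u b := fun hq => hSwb (hP.symm.trans hq)
      constructor
      · -- flip 1 : merge then split
        have m1 : ncyc (ψ * swap u b) + 1 = ncyc ψ := ncyc_merge ψ hQn
        have hchar := sameCycle_mul_swap_iff ψ hQn
        have hsaw : (ψ * swap u b).SameCycle a w :=
          (hchar a w).2 (Or.inr (Or.inr ⟨hSab_iff.2 hP, hP.symm⟩))
        have s2 : ncyc (ψ * swap u b * swap a w) = ncyc (ψ * swap u b) + 1 :=
          ncyc_split (ψ * swap u b) hsaw haw
        omega
      · -- flip 2 : split then split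
        have s1 : ncyc (ψ * swap u w) = ncyc ψ + 1 := ncyc_split ψ hP huw
        have hn2 : ¬ (ψ * swap u w).SameCycle u w := not_sameCycle_mul_swap ψ hP huw
        have hback : ψ * swap u w * swap u w = ψ := by
          rw [mul_assoc, swap_mul_self, mul_one]
        have hchar2 : ∀ x y : α, ψ.SameCycle x y ↔ (ψ * swap u w).SameCycle x y ∨
            ((ψ * swap u w).SameCycle x u ∧ (ψ * swap u w).SameCycle y w) ∨
            ((ψ * swap u w).SameCycle x w ∧ (ψ * swap u w).SameCycle y u) := by
          intro x y
          have h := sameCycle_mul_swap_iff (ψ * swap u w) hn2 x y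
          rwa [hback] at h
        have hmono : ∀ {x y : α}, (ψ * swap u w).SameCycle x y → ψ.SameCycle x y :=
          fun h => (hchar2 _ _).2 (Or.inl h)
        have hsab : (ψ * swap u w).SameCycle a b := by
          rcases (hchar2 a b).1 (hSab_iff.2 hP) with h' | ⟨h1, h2⟩ | ⟨h1, h2⟩
          · exact h'
          · exact absurd (hmono h1).symm hSua
          · exact absurd (hSaw_iff.1 (hmono h1)) hQn
        have s2 : ncyc (ψ * swap u w * swap a b) = ncyc (ψ * swap u w) + 1 :=
          ncyc_split (ψ * swap u w) hsab hab
        omega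
    · -- on the same cycle via `u ~ p w` : flip 1 splits, flip 2 keeps
      left
      have hPn : ¬ ψ.SameCycle u w := fun hp' => hSwb (hp'.symm.trans hQ)
      constructor
      · -- flip 1 : split then split
        have s1 : ncyc (ψ * swap u b) = ncyc ψ + 1 := ncyc_split ψ hQ hub
        have hn1 : ¬ (ψ * swap u b).SameCycle u b := not_sameCycle_mul_swap ψ hQ hub
        have hback : ψ * swap u b * swap u b = ψ := by
          rw [mul_assoc, swap_mul_self, mul_one]
        have hchar1 : ∀ x y : α, ψ.SameCycle x y ↔ (ψ * swap u b).SameCycle x y ∨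
            ((ψ * swap u b).SameCycle x u ∧ (ψ * swap u b).SameCycle y b) ∨
            ((ψ * swap u b).SameCycle x b ∧ (ψ * swap u b).SameCycle y u) := by
          intro x y
          have h := sameCycle_mul_swap_iff (ψ * swap u b) hn1 x y
          rwa [hback] at h
        have hmono : ∀ {x y : α}, (ψ * swap u b).SameCycle x y → ψ.SameCycle x y :=
          fun h => (hchar1 _ _).2 (Or.inl h)
        have hsaw : (ψ * swap u b).SameCycle a w := by
          rcases (hchar1 a w).1 (hSaw_iff.2 hQ) with h' | ⟨h1, h2⟩ | ⟨h1, h2⟩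
          · exact h'
          · exact absurd (hmono h1).symm hSua
          · exact absurd (hSab_iff.1 (hmono h1)) hPn
        have s2 : ncyc (ψ * swap u b * swap a w) = ncyc (ψ * swap u b) + 1 :=
          ncyc_split (ψ * swap u b) hsaw haw
        omega
      · -- flip 2 : merge then split
        have m1 : ncyc (ψ * swap u w) + 1 = ncyc ψ := ncyc_merge ψ hPn
        have hchar := sameCycle_mul_swap_iff ψ hPn
        have hsab : (ψ * swap u w).SameCycle a b :=
          (hchar a b).2 (Or.inr (Or.inr ⟨hSaw_iff.2 hQ, hQ.symm⟩))
        have s2 : ncyc (ψ * swap u w * swap a b) = ncyc (ψ * swap u w) + 1 :=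
          ncyc_split (ψ * swap u w) hsab hab
        omega

end Faces

section GraphGlue

theorem colPerm_sq (G : TGraph) (c : Fin 3) : ∀ v, G.colPerm c (G.colPerm c v) = v := by
  rintro ⟨i, k⟩
  have hk : ∀ j : Fin 4, bubblePerm c (bubblePerm c j) = j := by fin_cases c <;> decide
  simp [TGraph.colPerm, hk]

theorem colPerm_ne (G : TGraph) (c : Fin 3) : ∀ v, G.colPerm c v ≠ v := by
  rintro ⟨i, k⟩ h
  have hne : ∀ j : Fin 4, bubblePerm c j ≠ j := by fin_cases c <;> decide
  simp only [TGraph.colPerm, Equiv.prodCongr_apply, Equiv.refl_apply, Prod.map,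
    Prod.mk.injEq] at h
  exact hne k h.2

theorem two_mul_numFaces (G : TGraph) (c : Fin 3) :
    ncyc (G.colPerm c * G.pairing) = 2 * G.numFaces c :=
  ncyc_eq_two_mul G.pairing (G.colPerm c) G.invol G.fixfree (colPerm_sq G c) (colPerm_ne G c)

theorem sameFace_iff' (G : TGraph) (c : Fin 3) (u w : G.V) :
    G.sameFace c u w ↔ (G.colPerm c * G.pairing).SameCycle u w ∨
      (G.colPerm c * G.pairing).SameCycle u (G.pairing w) :=
  mem_faceOrbit_iff G.pairing (G.colPerm c) G.invol (colPerm_sq G c) u w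

end GraphGlue

end FlipAux


/-- If the two (distinct) color-0 edges `{u, pairing u}`,
`{w, pairing w}` do not form a 2-edge-cut then: if they lie on two distinct
faces of color `c` (`F_c^{{e_L,e_R}} = 2`), both flips merge these two faces,
decreasing `F_c` by one; if they lie on a single common face of color `c`
(`F_c^{{e_L,e_R}} = 1`), one of the two flips splits this face, increasing
`F_c` by one, while the other flip leaves `F_c` unchanged. -/
theorem flip_face_variation (G : TGraph) (u w : G.V)
    (hw1 : w ≠ u) (hw2 : w ≠ G.pairing u)
    (hcut : ¬ G.CutDisconnects u w) (c : Fin 3) :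
    (¬ G.sameFace c u w →
      ((G.flip u w).numFaces c : ℤ) = (G.numFaces c : ℤ) - 1 ∧
        ((G.flip u (G.pairing w)).numFaces c : ℤ) = (G.numFaces c : ℤ) - 1) ∧
    (G.sameFace c u w →
      ((G.flip u w).numFaces c = G.numFaces c + 1 ∧
        (G.flip u (G.pairing w)).numFaces c = G.numFaces c) ∨
      ((G.flip u w).numFaces c = G.numFaces c ∧
        (G.flip u (G.pairing w)).numFaces c = G.numFaces c + 1)) := by
  classical
  have hp2 := G.invol
  have hpf := G.fixfree
  have hm2 := FlipAux.colPerm_sq G c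
  have hmf := FlipAux.colPerm_ne G c
  have hcore := FlipAux.flip_core G.pairing (G.colPerm c) hp2 hpf hm2 hmf u w hw1 hw2
  have hsf : G.sameFace c u w ↔ (G.colPerm c * G.pairing).SameCycle u w ∨
      (G.colPerm c * G.pairing).SameCycle u (G.pairing w) :=
    FlipAux.sameFace_iff' G c u w
  have hF : FlipAux.ncyc (G.colPerm c * G.pairing) = 2 * G.numFaces c :=
    FlipAux.two_mul_numFaces G c
  have hpinv : G.pairing⁻¹ = G.pairing := FlipAux.perm_inv_eq G.pairing hp2
  have e1 : (G.flip u w).colPerm c * (G.flip u w).pairing =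
      G.colPerm c * G.pairing * Equiv.swap u (G.pairing w) * Equiv.swap (G.pairing u) w := by
    have hcol : (G.flip u w).colPerm c = G.colPerm c := rfl
    have hpair : (G.flip u w).pairing =
        Equiv.swap (G.pairing u) w * G.pairing * Equiv.swap (G.pairing u) w := rfl
    rw [hcol, hpair, Equiv.swap_mul_eq_mul_swap, hpinv, G.invol u]
    show G.colPerm c * (G.pairing * Equiv.swap u (G.pairing w) * Equiv.swap (G.pairing u) w) =
      G.colPerm c * G.pairing * Equiv.swap u (G.pairing w) * Equiv.swap (G.pairing u) w
    rw [← mul_assoc, ← mul_assoc]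
  have hF1 : FlipAux.ncyc
      (G.colPerm c * G.pairing * Equiv.swap u (G.pairing w) * Equiv.swap (G.pairing u) w) =
      2 * (G.flip u w).numFaces c := by
    rw [← e1]
    exact FlipAux.two_mul_numFaces (G.flip u w) c
  have e2 : (G.flip u (G.pairing w)).colPerm c * (G.flip u (G.pairing w)).pairing =
      G.colPerm c * G.pairing * Equiv.swap u w *
        Equiv.swap (G.pairing u) (G.pairing w) := by
    have hcol : (G.flip u (G.pairing w)).colPerm c = G.colPerm c := rfl
    have hpair : (G.flip u (G.pairing w)).pairing =
        Equiv.swap (G.pairing u) (G.pairing w) * G.pairing *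
          Equiv.swap (G.pairing u) (G.pairing w) := rfl
    rw [hcol, hpair, Equiv.swap_mul_eq_mul_swap, hpinv, G.invol u, G.invol w]
    show G.colPerm c * (G.pairing * Equiv.swap u w * Equiv.swap (G.pairing u) (G.pairing w)) =
      G.colPerm c * G.pairing * Equiv.swap u w * Equiv.swap (G.pairing u) (G.pairing w)
    rw [← mul_assoc, ← mul_assoc]
  have hF2 : FlipAux.ncyc (G.colPerm c * G.pairing * Equiv.swap u w *
      Equiv.swap (G.pairing u) (G.pairing w)) =
      2 * (G.flip u (G.pairing w)).numFaces c := by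
    rw [← e2]
    exact FlipAux.two_mul_numFaces (G.flip u (G.pairing w)) c
  constructor
  · intro hnsf
    obtain ⟨h1, h2⟩ := hcore.1 (fun hor => hnsf (hsf.2 hor))
    rw [hF1, hF] at h1
    rw [hF2, hF] at h2
    exact ⟨by omega, by omega⟩
  · intro hsfy
    rcases hcore.2 (hsf.1 hsfy) with ⟨h1, h2⟩ | ⟨h1, h2⟩
    · rw [hF1, hF] at h1
      rw [hF2, hF] at h2
      left
      exact ⟨by omega, by omega⟩
    · rw [hF1, hF] at h1
      rw [hF2, hF] at h2
      right
      exact ⟨by omega, by omega⟩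
end
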